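/- arXiv:2403.04262 — 4 statements merged into one kernel-verified Lean document; each statement's English description precedes it below -/
import Mathlib

section
/- Consider the structured problem of minimizing φ = f + g, where f : ℝⁿ → ℝ is differentiable with ∇f Lipschitz continuous on ℝⁿ with modulus L_f > 0, and g : ℝⁿ → ℝ ∪ {+∞} is proper, lower semicontinuous, and prox-bounded with threshold λ_g. If x̄ is a global minimizer of φ, then for every λ ∈ (0, min{1/L_f, λ_g}) the set Prox_{λg}(x̄ − λ∇f(x̄)) is the singleton {x̄}; in particular, x̄ is a λ-critical point of the problem. -/
open Filter Topology

notation "⟪" x ", " y "⟫" => @inner ℝ _ _ x y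

noncomputable section

abbrev En (n : ℕ) : Type := EuclideanSpace ℝ (Fin n)

namespace Paper

variable {n : ℕ}

/-- A function `φ : ℝⁿ → ℝ ∪ {+∞}` (encoded into `EReal`) is proper if it is
nowhere `-∞` and somewhere finite. -/
def Proper (φ : En n → EReal) : Prop := (∃ x, φ x ≠ ⊤) ∧ ∀ x, φ x ≠ ⊥

/-- Fréchet (regular) subdifferential. -/
def RegSubdiff (φ : En n → EReal) (x : En n) : Set (En n) :=
  {v | φ x ≠ ⊤ ∧ ∀ ε : ℝ, 0 < ε → ∃ δ : ℝ, 0 < δ ∧ ∀ y : En n, ‖y - x‖ < δ →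
      φ x + ((⟪v, y - x⟫ - ε * ‖y - x‖ : ℝ) : EReal) ≤ φ y}

/-- Limiting (Mordukhovich) subdifferential. -/
def LimSubdiff (φ : En n → EReal) (x : En n) : Set (En n) :=
  {v | ∃ xs : ℕ → En n, ∃ vs : ℕ → En n,
      Tendsto xs atTop (𝓝 x) ∧
      Tendsto (fun k => φ (xs k)) atTop (𝓝 (φ x)) ∧
      Tendsto vs atTop (𝓝 v) ∧ ∀ k, vs k ∈ RegSubdiff φ (xs k)}

/-- Graph of the limiting subdifferential. -/
def gphSubdiff (φ : En n → EReal) : Set (En n × En n) :=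
  {p | p.2 ∈ LimSubdiff φ p.1}

/-- Regular (Fréchet) normal cone to a subset of the product `ℝⁿ × ℝⁿ`. -/
def RegNormalConeP (Ω : Set (En n × En n)) (z : En n × En n) : Set (En n × En n) :=
  {v | ∀ ε : ℝ, 0 < ε → ∃ δ : ℝ, 0 < δ ∧ ∀ w ∈ Ω, ‖w - z‖ < δ →
      ⟪v.1, w.1 - z.1⟫ + ⟪v.2, w.2 - z.2⟫ ≤ ε * ‖w - z‖}

/-- Limiting normal cone to a subset of the product `ℝⁿ × ℝⁿ`. -/
def LimNormalConeP (Ω : Set (En n × En n)) (z : En n × En n) : Set (En n × En n) :=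
  {v | ∃ zs : ℕ → En n × En n, ∃ vs : ℕ → En n × En n,
      (∀ k, zs k ∈ Ω) ∧ Tendsto zs atTop (𝓝 z) ∧ Tendsto vs atTop (𝓝 v) ∧
      ∀ k, vs k ∈ RegNormalConeP Ω (zs k)}

/-- Directional limiting normal cone. -/
def DirLimNormalConeP (Ω : Set (En n × En n)) (z d : En n × En n) :
    Set (En n × En n) :=
  {v | ∃ t : ℕ → ℝ, ∃ ds : ℕ → En n × En n, ∃ vs : ℕ → En n × En n,
      (∀ k, 0 < t k) ∧ Tendsto t atTop (𝓝 0) ∧ Tendsto ds atTop (𝓝 d) ∧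
      Tendsto vs atTop (𝓝 v) ∧ ∀ k, vs k ∈ RegNormalConeP Ω (z + t k • ds k)}

/-- Semismoothness* of a set-valued map (given by its graph) at a point of the graph. -/
def SemismoothStar (Ω : Set (En n × En n)) (z : En n × En n) : Prop :=
  ∀ u v ustar vstar : En n,
    (ustar, -vstar) ∈ DirLimNormalConeP Ω z (u, v) → ⟪ustar, u⟫ = ⟪vstar, v⟫

/-- Second-order subdifferential (generalized Hessian) of `φ` at `x` for `v`. -/
def SecondSubdiff (φ : En n → EReal) (x v u : En n) : Set (En n) :=
  {w | (w, -u) ∈ LimNormalConeP (gphSubdiff φ) (x, v)}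

/-- Graph of the gradient mapping of a real-valued function. -/
def gphGrad (h : En n → ℝ) : Set (En n × En n) := {p | p.2 = gradient h p.1}

/-- Second-order subdifferential of a `C¹` real-valued function via its gradient graph. -/
def SecondSubdiffFun (h : En n → ℝ) (x v u : En n) : Set (En n) :=
  {w | (w, -u) ∈ LimNormalConeP (gphGrad h) (x, v)}

/-- Metric regularity of a set-valued map around a point of its graph. -/
def MetrReg (F : En n → Set (En n)) (x y : En n) : Prop :=
  ∃ μ : ℝ, 0 < μ ∧ ∃ U ∈ 𝓝 x, ∃ V ∈ 𝓝 y, ∀ a ∈ U, ∀ b ∈ V,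
    EMetric.infEdist a {z | b ∈ F z} ≤ ENNReal.ofReal μ * EMetric.infEdist b (F a)

/-- Moreau envelope. -/
def moreau (φ : En n → EReal) (lam : ℝ) (x : En n) : EReal :=
  ⨅ y : En n, φ y + ((‖y - x‖ ^ 2 / (2 * lam) : ℝ) : EReal)

/-- Proximal mapping (as the set of minimizers). -/
def proxSet (φ : En n → EReal) (lam : ℝ) (x : En n) : Set (En n) :=
  {y | ∀ z : En n, φ y + ((‖y - x‖ ^ 2 / (2 * lam) : ℝ) : EReal)
        ≤ φ z + ((‖z - x‖ ^ 2 / (2 * lam) : ℝ) : EReal)}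

/-- Prox-boundedness. -/
def ProxBounded (φ : En n → EReal) : Prop :=
  ∃ lam : ℝ, 0 < lam ∧ ∃ x, moreau φ lam x ≠ ⊥

/-- Threshold of prox-boundedness. -/
def proxThreshold (φ : En n → EReal) : EReal :=
  sSup {l : EReal | ∃ lam : ℝ, l = (lam : EReal) ∧ 0 < lam ∧ ∃ x, moreau φ lam x ≠ ⊥}

/-- `r`-level prox-regularity at `xb` for `vb ∈ ∂φ(xb)`. -/
def ProxRegular (φ : En n → EReal) (r : ℝ) (xb vb : En n) : Prop :=
  vb ∈ LimSubdiff φ xb ∧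
  ∃ ε : ℝ, 0 < ε ∧ ∃ U ∈ 𝓝 xb, ∃ V ∈ 𝓝 vb,
    ∀ x ∈ U, ∀ u ∈ U, ∀ v ∈ V, v ∈ LimSubdiff φ u → φ u < φ xb + (ε : EReal) →
      φ u + ((⟪v, x - u⟫ - r / 2 * ‖x - u‖ ^ 2 : ℝ) : EReal) ≤ φ x

/-- Subdifferential continuity at `xb` for `vb ∈ ∂φ(xb)`. -/
def SubdiffCont (φ : En n → EReal) (xb vb : En n) : Prop :=
  vb ∈ LimSubdiff φ xb ∧
  ∀ ε : ℝ, 0 < ε → ∃ δ : ℝ, 0 < δ ∧ ∀ x v : En n, v ∈ LimSubdiff φ x →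
    ‖x - xb‖ < δ → ‖v - vb‖ < δ →
      φ xb - (ε : EReal) < φ x ∧ φ x < φ xb + (ε : EReal)

/-- Continuous `r`-level prox-regularity. -/
def ContProxRegular (φ : En n → EReal) (r : ℝ) (xb vb : En n) : Prop :=
  ProxRegular φ r xb vb ∧ SubdiffCont φ xb vb

/-- Continuous prox-regularity (for some level `r ≥ 0`). -/
def ContinuouslyProxRegular (φ : En n → EReal) (xb vb : En n) : Prop :=
  (∃ r : ℝ, 0 ≤ r ∧ ProxRegular φ r xb vb) ∧ SubdiffCont φ xb vb

/-- The structured sum `φ = f + g`. -/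
def phiSum (f : En n → ℝ) (g : En n → EReal) : En n → EReal :=
  fun x => (f x : EReal) + g x

/-- Hessian of a `C²` function as a continuous linear map. -/
def hess (f : En n → ℝ) (x : En n) : En n →L[ℝ] En n := fderiv ℝ (gradient f) x

/-- Normal map associated with the structured problem. -/
def normalMap (f : En n → ℝ) (g : En n → EReal) (lam : ℝ) (x : En n) : Set (En n) :=
  {w | ∃ xh ∈ proxSet g lam x, w = gradient f xh + (1 / lam) • (x - xh)}

/-- `λ`-critical points of the structured problem. -/
def lamCritical (f : En n → ℝ) (g : En n → EReal) (lam : ℝ) (x : En n) : Prop :=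
  x ∈ proxSet g lam (x - lam • gradient f x)

/-- Forward-backward envelope. -/
def FBE (f : En n → ℝ) (g : En n → EReal) (lam : ℝ) (x : En n) : EReal :=
  ⨅ y : En n,
    ((f x + ⟪gradient f x, y - x⟫ + ‖y - x‖ ^ 2 / (2 * lam) : ℝ) : EReal) + g y

/-- Real-valued forward-backward envelope. -/
def FBEr (f : En n → ℝ) (g : En n → EReal) (lam : ℝ) (x : En n) : ℝ :=
  (FBE f g lam x).toReal

/-- Tilt-stable local minimizer. -/
def TiltStable (φ : En n → EReal) (xb : En n) : Prop :=
  ∃ γ : ℝ, 0 < γ ∧ ∃ M : En n → En n, ∃ W ∈ 𝓝 (0 : En n), ∃ K : NNReal,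
    LipschitzOnWith K M W ∧ M 0 = xb ∧
    ∀ v ∈ W, {y : En n | ‖y - xb‖ ≤ γ ∧ ∀ z : En n, ‖z - xb‖ ≤ γ →
        φ y + ((-⟪v, y⟫ : ℝ) : EReal) ≤ φ z + ((-⟪v, z⟫ : ℝ) : EReal)} = {M v}

/-- `r`-weak convexity (`r = 0` is plain convexity). -/
def WeaklyConvex (g : En n → EReal) (r : ℝ) : Prop :=
  ∀ x y : En n, ∀ t : ℝ, 0 ≤ t → t ≤ 1 →
    g (t • x + (1 - t) • y) + ((r / 2 * ‖t • x + (1 - t) • y‖ ^ 2 : ℝ) : EReal) ≤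
      (t : EReal) * (g x + ((r / 2 * ‖x‖ ^ 2 : ℝ) : EReal)) +
        ((1 - t : ℝ) : EReal) * (g y + ((r / 2 * ‖y‖ ^ 2 : ℝ) : EReal))

/-- Second subderivative. -/
def secondSubderiv (φ : En n → EReal) (x v w : En n) : EReal :=
  Filter.liminf
    (fun p : ℝ × En n =>
      ((2 / p.1 ^ 2 : ℝ) : EReal) *
        (φ (x + p.1 • p.2) - φ x - ((p.1 * ⟪v, p.2⟫ : ℝ) : EReal)))
    ((𝓝[>] (0 : ℝ)) ×ˢ 𝓝 w)

/-- Twice epi-differentiability. -/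
def TwiceEpiDiff (φ : En n → EReal) (x v : En n) : Prop :=
  ∀ w : En n, ∀ τ : ℕ → ℝ, (∀ k, 0 < τ k) → Tendsto τ atTop (𝓝 0) →
    ∃ ws : ℕ → En n, Tendsto ws atTop (𝓝 w) ∧
      Tendsto (fun k =>
        ((2 / τ k ^ 2 : ℝ) : EReal) *
          (φ (x + τ k • ws k) - φ x - ((τ k * ⟪v, ws k⟫ : ℝ) : EReal)))
        atTop (𝓝 (secondSubderiv φ x v w))

/-- Strong variational convexity (via the subgradient characterization). -/
def StronglyVarConvex (φ : En n → EReal) (xb vb : En n) : Prop :=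
  vb ∈ LimSubdiff φ xb ∧
  ∃ σ : ℝ, 0 < σ ∧ ∃ ε : ℝ, 0 < ε ∧ ∃ U ∈ 𝓝 xb, ∃ V ∈ 𝓝 vb,
    ∀ u₁ ∈ U, ∀ u₂ ∈ U, ∀ v₁ ∈ V, ∀ v₂ ∈ V,
      v₁ ∈ LimSubdiff φ u₁ → v₂ ∈ LimSubdiff φ u₂ →
      φ u₁ < φ xb + (ε : EReal) → φ u₂ < φ xb + (ε : EReal) →
      σ * ‖u₁ - u₂‖ ^ 2 ≤ ⟪v₁ - v₂, u₁ - u₂⟫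

/-- Bouligand Jacobian. -/
def BouligandJac (h : En n → En n) (x : En n) : Set (En n →L[ℝ] En n) :=
  {H | ∃ xs : ℕ → En n, Tendsto xs atTop (𝓝 x) ∧ (∀ k, DifferentiableAt ℝ h (xs k)) ∧
      Tendsto (fun k => fderiv ℝ h (xs k)) atTop (𝓝 H)}

/-- The ℓ₀-"norm": number of nonzero components. -/
def ell0 (x : En n) : ℕ := (Finset.univ.filter fun i => x i ≠ 0).card

end Paper

open Paper


open InnerProductSpace in
lemma descent_lemma {n : ℕ} (f : En n → ℝ) (L : ℝ) (hL : 0 ≤ L)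
    (hdiff : Differentiable ℝ f)
    (hlip : LipschitzWith (Real.toNNReal L) (gradient f)) (x y : En n) :
    f y ≤ f x + ⟪gradient f x, y - x⟫ + L / 2 * ‖y - x‖ ^ 2 := by
  set v := y - x with hv
  set F : ℝ → ℝ := fun t =>
    f (x + t • v) - t * ⟪gradient f x, v⟫ - L / 2 * t ^ 2 * ‖v‖ ^ 2 with hF
  have key : ∀ t : ℝ, HasDerivAt F
      (⟪gradient f (x + t • v), v⟫ - ⟪gradient f x, v⟫ - L * t * ‖v‖ ^ 2) t := by
    intro t
    have h1 : HasDerivAt (fun t : ℝ => x + t • v) v t := by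
      simpa using ((hasDerivAt_id t).smul_const v).const_add x
    have h2 : HasDerivAt (fun t : ℝ => f (x + t • v)) ((fderiv ℝ f (x + t • v)) v) t :=
      (hdiff (x + t • v)).hasFDerivAt.comp_hasDerivAt t h1
    have h2' : (fderiv ℝ f (x + t • v)) v = ⟪gradient f (x + t • v), v⟫ := by
      have hg := (hdiff (x + t • v)).hasGradientAt.hasFDerivAt
      rw [hg.fderiv]
      simp [InnerProductSpace.toDual_apply_apply]
    rw [h2'] at h2
    have h3 : HasDerivAt (fun t : ℝ => t * ⟪gradient f x, v⟫) ⟪gradient f x, v⟫ t := by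
      simpa using (hasDerivAt_id t).mul_const (⟪gradient f x, v⟫ : ℝ)
    have h4 : HasDerivAt (fun t : ℝ => L / 2 * t ^ 2 * ‖v‖ ^ 2) (L * t * ‖v‖ ^ 2) t := by
      have h5 := ((hasDerivAt_pow 2 t).const_mul (L / 2)).mul_const (‖v‖ ^ 2)
      exact h5.congr_deriv (by ring)
    exact (h2.sub h3).sub h4
  have hanti : AntitoneOn F (Set.Icc (0 : ℝ) 1) := by
    apply antitoneOn_of_deriv_nonpos (convex_Icc 0 1)
    · exact fun t _ => ((key t).continuousAt).continuousWithinAt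
    · exact fun t _ => ((key t).differentiableAt).differentiableWithinAt
    · intro t ht
      rw [interior_Icc] at ht
      rw [(key t).deriv]
      have hlip' : ‖gradient f (x + t • v) - gradient f x‖ ≤ L * (t * ‖v‖) := by
        have := hlip.dist_le_mul (x + t • v) x
        simp only [dist_eq_norm] at this
        have h6 : x + t • v - x = t • v := by abel
        rw [h6] at this
        calc ‖gradient f (x + t • v) - gradient f x‖ ≤ (Real.toNNReal L : ℝ) * ‖t • v‖ := this
          _ = L * (t * ‖v‖) := by
              rw [Real.coe_toNNReal _ hL, norm_smul, Real.norm_eq_abs,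
                abs_of_pos ht.1]
      have hin : ⟪gradient f (x + t • v), v⟫ - ⟪gradient f x, v⟫ ≤ L * t * ‖v‖ ^ 2 := by
        rw [← inner_sub_left]
        calc ⟪gradient f (x + t • v) - gradient f x, v⟫
            ≤ ‖gradient f (x + t • v) - gradient f x‖ * ‖v‖ := real_inner_le_norm _ _
          _ ≤ L * (t * ‖v‖) * ‖v‖ := by
              apply mul_le_mul_of_nonneg_right hlip' (norm_nonneg v)
          _ = L * t * ‖v‖ ^ 2 := by ring
      linarith
  have h01 := hanti (Set.mem_Icc.2 ⟨le_refl 0, zero_le_one⟩)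
    (Set.mem_Icc.2 ⟨zero_le_one, le_refl 1⟩) zero_le_one
  have hxy : x + (1 : ℝ) • v = y := by
    rw [one_smul, hv]; abel
  simp only [hF, hxy, zero_smul, add_zero, zero_mul, sub_zero, one_mul,
    one_pow, mul_one, zero_pow, OfNat.ofNat_ne_zero, ne_eq, not_false_iff, mul_zero] at h01
  linarith

/-- necessary condition for optimality in the structured problem:
the global minimizer is a fixed point of the prox-gradient map. -/
theorem statement5 {n : ℕ} (f : En n → ℝ) (g : En n → EReal) (Lf : ℝ)
    (lamg : EReal) (xb : En n)
    (hLf : 0 < Lf) (hdiff : Differentiable ℝ f)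
    (hlip : LipschitzWith (Real.toNNReal Lf) (gradient f))
    (hproper : Proper g) (hlsc : LowerSemicontinuous g)
    (hpb : ProxBounded g) (hth : lamg = proxThreshold g)
    (hmin : ∀ y : En n, phiSum f g xb ≤ phiSum f g y) :
    ∀ lam : ℝ, 0 < lam → lam < 1 / Lf → (lam : EReal) < lamg →
      proxSet g lam (xb - lam • gradient f xb) = {xb} ∧ lamCritical f g lam xb := by
  intro lam hlam hlam1 _
  set xp := xb - lam • gradient f xb with hxp
  obtain ⟨⟨z0, hz0⟩, hnb⟩ := hproper
  obtain ⟨c0, hc0⟩ : ∃ c0 : ℝ, g z0 = (c0 : EReal) :=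
    ⟨(g z0).toReal, (EReal.coe_toReal hz0 (hnb z0)).symm⟩
  have hgxb_ne_top : g xb ≠ ⊤ := by
    intro h
    have hm := hmin z0
    rw [phiSum, phiSum, h, hc0, EReal.coe_add_top, top_le_iff, ← EReal.coe_add] at hm
    exact EReal.coe_ne_top _ hm
  obtain ⟨b, hb⟩ : ∃ b : ℝ, g xb = (b : EReal) :=
    ⟨(g xb).toReal, (EReal.coe_toReal hgxb_ne_top (hnb xb)).symm⟩
  have hlamne : (2 : ℝ) * lam ≠ 0 := by positivity
  -- algebraic identity
  have hid : ∀ y : En n, ‖y - xp‖ ^ 2 / (2 * lam) =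
      ‖y - xb‖ ^ 2 / (2 * lam) + ⟪gradient f xb, y - xb⟫ + ‖xb - xp‖ ^ 2 / (2 * lam) := by
    intro y
    have h1 : y - xp = (y - xb) + lam • gradient f xb := by
      rw [hxp]; abel
    have h2 : xb - xp = lam • gradient f xb := by rw [hxp]; abel
    rw [h1, h2, norm_add_sq_real, real_inner_smul_right, norm_smul,
      Real.norm_eq_abs, abs_of_pos hlam, mul_pow, real_inner_comm]
    field_simp
  have hdelta : 0 < 1 / (2 * lam) - Lf / 2 := by
    have h1 : lam * Lf < 1 := (lt_div_iff₀ hLf).1 hlam1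
    have h2 : Lf / 2 < 1 / (2 * lam) := by
      rw [div_lt_div_iff₀ two_pos (by positivity)]
      nlinarith
    linarith
  -- key real inequality
  have hkey : ∀ y : En n, ∀ a : ℝ, g y = (a : EReal) →
      b + ‖xb - xp‖ ^ 2 / (2 * lam) + (1 / (2 * lam) - Lf / 2) * ‖y - xb‖ ^ 2
        ≤ a + ‖y - xp‖ ^ 2 / (2 * lam) := by
    intro y a ha
    have hm := hmin y
    rw [phiSum, phiSum, hb, ha, ← EReal.coe_add, ← EReal.coe_add,
      EReal.coe_le_coe_iff] at hm
    have hd := descent_lemma f Lf (le_of_lt hLf) hdiff hlip xb y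
    rw [hid y]
    have hsq : (1 / (2 * lam)) * ‖y - xb‖ ^ 2 = ‖y - xb‖ ^ 2 / (2 * lam) := by ring
    nlinarith [hd, hm]
  -- membership
  have hmem : xb ∈ proxSet g lam xp := by
    intro z
    rcases eq_or_ne (g z) ⊤ with hz | hz
    · rw [hz, EReal.top_add_coe]
      exact le_top
    · obtain ⟨a, ha⟩ : ∃ a : ℝ, g z = (a : EReal) :=
        ⟨(g z).toReal, (EReal.coe_toReal hz (hnb z)).symm⟩
      rw [hb, ha, ← EReal.coe_add, ← EReal.coe_add, EReal.coe_le_coe_iff]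
      have := hkey z a ha
      nlinarith [sq_nonneg ‖z - xb‖, this]
  have hset : proxSet g lam xp = {xb} := by
    ext y
    simp only [Set.mem_singleton_iff]
    constructor
    · intro hy
      have h1 := hy xb
      have h2 := hmem y
      have hyne : g y ≠ ⊤ := by
        intro h
        rw [h, EReal.top_add_coe, top_le_iff, hb, ← EReal.coe_add] at h1
        exact EReal.coe_ne_top _ h1
      obtain ⟨a, ha⟩ : ∃ a : ℝ, g y = (a : EReal) :=
        ⟨(g y).toReal, (EReal.coe_toReal hyne (hnb y)).symm⟩
      rw [hb, ha, ← EReal.coe_add, ← EReal.coe_add, EReal.coe_le_coe_iff] at h1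
      have hk := hkey y a ha
      have hzero : ‖y - xb‖ ^ 2 ≤ 0 := by nlinarith
      have : ‖y - xb‖ = 0 := by nlinarith [sq_nonneg ‖y - xb‖, norm_nonneg (y - xb)]
      have : y - xb = 0 := norm_eq_zero.1 this
      linear_combination (norm := abel) this
    · rintro rfl
      exact hmem
  exact ⟨hset, hmem⟩
end
end

section
/- Consider the structured problem of minimizing φ = f + g, where f : ℝⁿ → ℝ is C²-smooth with ∇f Lipschitz continuous on ℝⁿ with modulus L_f > 0, and g : ℝⁿ → ℝ ∪ {+∞} is proper, lower semicontinuous, and prox-bounded with threshold λ_g. Let λ ∈ (0, min{1/L_f, λ_g}) and σ ∈ (0, λ(1 − λL_f)/(2(1 + λL_f)²)). For x ∈ ℝⁿ take x̂ ∈ Prox_{λg}(x − λ∇f(x)) and set v̂ := ∇f(x̂) − ∇f(x) + (1/λ)(x − x̂). If x̂ ≠ x, then v̂ ≠ 0 and the forward-backward envelope satisfies φ_λ(x̂) < φ_λ(x) − σ‖v̂‖². Consequently, for every d ∈ ℝⁿ there exists τ̄ > 0 such that φ_λ(x̂ + τd) ≤ φ_λ(x) − σ‖v̂‖² for all τ ∈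 (0, τ̄). -/
open Filter Topology

noncomputable section

open Paper

section Aux14

variable {n : ℕ}

private lemma aux14_inner_grad (f : En n → ℝ) (z w : En n) :
    ⟪gradient f z, w⟫ = fderiv ℝ f z w := by
  rw [← InnerProductSpace.toDual_apply_apply]
  simp [gradient]

private lemma aux14_descent (f : En n → ℝ) (hf : ContDiff ℝ 2 f) (Lf : ℝ)
    (hlip : ∀ a b : En n, ‖gradient f a - gradient f b‖ ≤ Lf * ‖a - b‖) (x y : En n) :
    f y ≤ f x + ⟪gradient f x, y - x⟫ + Lf / 2 * ‖y - x‖ ^ 2 := by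
  have hdf : Differentiable ℝ f := hf.differentiable (by norm_num)
  set d := y - x with hd
  have hline : ∀ t : ℝ, HasDerivAt (fun t : ℝ => f (x + t • d))
      ⟪gradient f (x + t • d), d⟫ t := by
    intro t
    have h1 : HasDerivAt (fun t : ℝ => x + t • d) d t := by
      simpa using ((hasDerivAt_id t).smul_const d).const_add x
    have h2 := ((hdf (x + t • d)).hasFDerivAt).comp_hasDerivAt t h1
    rw [aux14_inner_grad]
    exact h2
  set F : ℝ → ℝ := fun t => f (x + t • d) - t * ⟪gradient f x, d⟫ - t ^ 2 * (Lf / 2 * ‖d‖ ^ 2)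
    with hF
  have hFd : ∀ t : ℝ, HasDerivAt F
      (⟪gradient f (x + t • d), d⟫ - ⟪gradient f x, d⟫ - (↑2 * t ^ 1) * (Lf / 2 * ‖d‖ ^ 2)) t := by
    intro t
    exact ((hline t).sub (hasDerivAt_mul_const _)).sub ((hasDerivAt_pow 2 t).mul_const _)
  have hcont : Continuous F := by
    have : Differentiable ℝ F := fun t => (hFd t).differentiableAt
    exact this.continuous
  have hanti : AntitoneOn F (Set.Icc 0 1) := by
    apply antitoneOn_of_deriv_nonpos (convex_Icc 0 1) hcont.continuousOn
      (fun t _ => (hFd t).differentiableAt.differentiableWithinAt)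
    intro t ht
    rw [interior_Icc] at ht
    rw [(hFd t).deriv]
    have h1 : ⟪gradient f (x + t • d) - gradient f x, d⟫ ≤ Lf * t * ‖d‖ ^ 2 := by
      calc ⟪gradient f (x + t • d) - gradient f x, d⟫
          ≤ ‖gradient f (x + t • d) - gradient f x‖ * ‖d‖ := real_inner_le_norm _ _
        _ ≤ (Lf * ‖(x + t • d) - x‖) * ‖d‖ := by
            gcongr; exact hlip _ _
        _ = Lf * t * ‖d‖ ^ 2 := by
            rw [add_sub_cancel_left, norm_smul, Real.norm_eq_abs, abs_of_pos ht.1]; ring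
    rw [inner_sub_left] at h1
    nlinarith [h1]
  have key := hanti (Set.left_mem_Icc.2 zero_le_one) (Set.right_mem_Icc.2 zero_le_one) zero_le_one
  simp only [hF, zero_smul, add_zero, one_smul, zero_pow, one_pow, zero_mul, sub_zero,
    one_mul] at key
  rw [add_sub_cancel] at key
  linarith [key]

private lemma aux14_quad_identity (lam : ℝ) (hlam : 0 < lam) (gx x z : En n) :
    ⟪gx, z - x⟫ + ‖z - x‖ ^ 2 / (2 * lam) =
      ‖z - (x - lam • gx)‖ ^ 2 / (2 * lam) - lam / 2 * ‖gx‖ ^ 2 := by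
  have h1 : z - (x - lam • gx) = (z - x) + lam • gx := by abel
  rw [h1, @norm_add_sq_real, real_inner_smul_right, real_inner_comm, norm_smul,
    Real.norm_eq_abs, abs_of_pos hlam, mul_pow]
  field_simp
  ring

end Aux14

set_option maxHeartbeats 2000000 in
/-- descent property of the forward-backward envelope (stepsize
well-posedness of the generalized line-search proximal gradient method). -/
theorem statement14 {n : ℕ} (f : En n → ℝ) (g : En n → EReal)
    (Lf : ℝ) (lamg : EReal) (lam σ : ℝ)
    (hf : ContDiff ℝ 2 f) (hLf : 0 < Lf)
    (hlip : LipschitzWith (Real.toNNReal Lf) (gradient f))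
    (hproper : Proper g) (hlsc : LowerSemicontinuous g)
    (hpb : ProxBounded g) (hth : lamg = proxThreshold g)
    (hlam : 0 < lam ∧ lam < 1 / Lf ∧ (lam : EReal) < lamg)
    (hσ : 0 < σ ∧ σ < lam * (1 - lam * Lf) / (2 * (1 + lam * Lf) ^ 2)) :
    ∀ x : En n, ∀ xh ∈ proxSet g lam (x - lam • gradient f x), xh ≠ x →
      gradient f xh - gradient f x + (1 / lam) • (x - xh) ≠ 0 ∧
      FBE f g lam xh <
        FBE f g lam x -
          ((σ * ‖gradient f xh - gradient f x + (1 / lam) • (x - xh)‖ ^ 2 : ℝ) : EReal) ∧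
      ∀ d : En n, ∃ τb : ℝ, 0 < τb ∧ ∀ τ : ℝ, 0 < τ → τ < τb →
        FBE f g lam (xh + τ • d) ≤
          FBE f g lam x -
            ((σ * ‖gradient f xh - gradient f x + (1 / lam) • (x - xh)‖ ^ 2 : ℝ) : EReal) := by
  obtain ⟨hlam0, hlam1, hlam2⟩ := hlam
  obtain ⟨hσ0, hσ1⟩ := hσ
  obtain ⟨⟨z₀, hz₀⟩, hbot⟩ := hproper
  have hlamLf : lam * Lf < 1 := (lt_div_iff₀ hLf).mp hlam1
  have hgl : ∀ a b : En n, ‖gradient f a - gradient f b‖ ≤ Lf * ‖a - b‖ := by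
    intro a b
    have := hlip.dist_le_mul a b
    rwa [dist_eq_norm, dist_eq_norm, Real.coe_toNNReal _ hLf.le] at this
  intro x xh hxh hne
  simp only [proxSet, Set.mem_setOf_eq] at hxh
  set v : En n := gradient f xh - gradient f x + (1 / lam) • (x - xh) with hv
  set s : ℝ := ‖xh - x‖ with hs
  have hs0 : 0 < s := norm_pos_iff.mpr (sub_ne_zero.mpr hne)
  -- bounds on ‖v‖
  have hvub : ‖v‖ ≤ (Lf + 1 / lam) * s := by
    calc ‖v‖ ≤ ‖gradient f xh - gradient f x‖ + ‖(1 / lam) • (x - xh)‖ := norm_add_le _ _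
      _ ≤ Lf * s + (1 / lam) * s := by
          gcongr
          · exact hgl xh x
          · rw [norm_smul, Real.norm_eq_abs, abs_of_pos (by positivity), norm_sub_rev]
      _ = (Lf + 1 / lam) * s := by ring
  have hvlb : (1 / lam - Lf) * s ≤ ‖v‖ := by
    have h1 : ‖(1 / lam) • (x - xh)‖ ≤ ‖v‖ + ‖gradient f xh - gradient f x‖ := by
      have h2 : (1 / lam) • (x - xh) = v - (gradient f xh - gradient f x) := by
        rw [hv]; abel
      rw [h2]; exact norm_sub_le _ _
    have h3 : ‖(1 / lam) • (x - xh)‖ = (1 / lam) * s := by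
      rw [norm_smul, Real.norm_eq_abs, abs_of_pos (by positivity), norm_sub_rev]
    have h4 := hgl xh x
    rw [h3] at h1
    nlinarith [h1, h4]
  have hLflt : Lf < 1 / lam := by
    rw [lt_div_iff₀ hlam0]; linarith
  have hvne : v ≠ 0 := by
    have : 0 < ‖v‖ := lt_of_lt_of_le (by nlinarith) hvlb
    exact norm_pos_iff.mp this
  -- abbreviations
  set R : En n → En n → ℝ := fun z y => f z + ⟪gradient f z, y - z⟫ + ‖y - z‖ ^ 2 / (2 * lam)
    with hR
  have hFBE : ∀ z : En n, FBE f g lam z = ⨅ y, ((R z y : ℝ) : EReal) + g y := fun _ => rfl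
  -- finiteness of g xh
  have hz₀r : ((g z₀).toReal : EReal) = g z₀ := EReal.coe_toReal hz₀ (hbot z₀)
  have hgtop : g xh ≠ ⊤ := by
    intro h
    have h₀ := hxh z₀
    rw [h, ← hz₀r, ← EReal.coe_add] at h₀
    simp only [EReal.top_add_coe] at h₀
    exact EReal.coe_ne_top _ (top_le_iff.mp h₀)
  set G : ℝ := (g xh).toReal with hGdef
  have hG : (G : EReal) = g xh := EReal.coe_toReal hgtop (hbot xh)
  set c : ℝ := f x - lam / 2 * ‖gradient f x‖ ^ 2 with hc
  set u : En n := x - lam • gradient f x with hu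
  have hA : ∀ z : En n, R x z = c + ‖z - u‖ ^ 2 / (2 * lam) := by
    intro z
    have := aux14_quad_identity lam hlam0 (gradient f x) x z
    simp only [hR, hc, hu]
    linarith [this]
  -- value of FBE at x
  have step : ∀ y : En n, ((R x xh + G : ℝ) : EReal) ≤ ((R x y : ℝ) : EReal) + g y := by
    intro y
    have hy := hxh y
    have h2 := add_le_add_left hy ((c : ℝ) : EReal)
    calc ((R x xh + G : ℝ) : EReal)
        = (c : EReal) + (g xh + ((‖xh - u‖ ^ 2 / (2 * lam) : ℝ) : EReal)) := by
          rw [← hG, hA xh]; push_cast; abel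
      _ ≤ (c : EReal) + (g y + ((‖y - u‖ ^ 2 / (2 * lam) : ℝ) : EReal)) := by
          rw [add_comm (c : EReal), add_comm (c : EReal)]; exact h2
      _ = ((R x y : ℝ) : EReal) + g y := by
          rw [hA y]; push_cast; abel
  have hFBEx : FBE f g lam x = ((R x xh + G : ℝ) : EReal) := by
    rw [hFBE x]
    apply le_antisymm
    · calc (⨅ y, ((R x y : ℝ) : EReal) + g y) ≤ ((R x xh : ℝ) : EReal) + g xh := iInf_le _ xh
        _ = ((R x xh + G : ℝ) : EReal) := by rw [← hG, ← EReal.coe_add]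
    · exact le_iInf step
  -- upper bound for FBE at xh
  have hRxhxh : R xh xh = f xh := by simp [hR]
  have hFBExh : FBE f g lam xh ≤ ((f xh + G : ℝ) : EReal) := by
    calc FBE f g lam xh ≤ ((R xh xh : ℝ) : EReal) + g xh := by rw [hFBE xh]; exact iInf_le _ xh
      _ = ((f xh + G : ℝ) : EReal) := by rw [hRxhxh, ← hG, ← EReal.coe_add]
  -- descent lemma
  have hdesc : f xh ≤ f x + ⟪gradient f x, xh - x⟫ + Lf / 2 * s ^ 2 :=
    aux14_descent f hf Lf hgl x xh
  -- key strict real inequality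
  have hP : (0:ℝ) < 1 + lam * Lf := by positivity
  have hQ : (0:ℝ) < 1 - lam * Lf := by linarith
  have hσ2 : σ * (2 * (1 + lam * Lf) ^ 2) < lam * (1 - lam * Lf) :=
    (lt_div_iff₀ (by positivity)).mp hσ1
  have hvub2 : ‖v‖ ≤ (1 + lam * Lf) / lam * s := by
    have : (1 + lam * Lf) / lam = Lf + 1 / lam := by field_simp; ring
    rw [this]; exact hvub
  have hv2 : ‖v‖ ^ 2 ≤ ((1 + lam * Lf) / lam * s) ^ 2 :=
    pow_le_pow_left₀ (norm_nonneg v) hvub2 2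
  have key1 : σ * ((1 + lam * Lf) / lam) ^ 2 < (1 - lam * Lf) / (2 * lam) := by
    rw [div_pow, ← mul_div_assoc, div_lt_div_iff₀ (by positivity) (by positivity)]
    nlinarith [mul_lt_mul_of_pos_right hσ2 hlam0]
  have hσfinal : σ * ‖v‖ ^ 2 < s ^ 2 / (2 * lam) - Lf / 2 * s ^ 2 := by
    have h5 : σ * ‖v‖ ^ 2 ≤ σ * ((1 + lam * Lf) / lam) ^ 2 * s ^ 2 := by
      rw [mul_pow] at hv2
      calc σ * ‖v‖ ^ 2 ≤ σ * (((1 + lam * Lf) / lam) ^ 2 * s ^ 2) :=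
            mul_le_mul_of_nonneg_left hv2 hσ0.le
        _ = σ * ((1 + lam * Lf) / lam) ^ 2 * s ^ 2 := by ring
    have h6 : σ * ((1 + lam * Lf) / lam) ^ 2 * s ^ 2 < (1 - lam * Lf) / (2 * lam) * s ^ 2 :=
      mul_lt_mul_of_pos_right key1 (pow_pos hs0 2)
    have h7 : (1 - lam * Lf) / (2 * lam) * s ^ 2 = s ^ 2 / (2 * lam) - Lf / 2 * s ^ 2 := by
      field_simp
    linarith
  have hreal : f xh + G < R x xh + G - σ * ‖v‖ ^ 2 := by
    have hRx : R x xh = f x + ⟪gradient f x, xh - x⟫ + s ^ 2 / (2 * lam) := by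
      simp only [hR, hs]
    rw [hRx]
    linarith [hdesc, hσfinal]
  -- EReal version of part 2
  set C : ℝ := R x xh + G - σ * ‖v‖ ^ 2 with hCdef
  have hCeq : FBE f g lam x - ((σ * ‖v‖ ^ 2 : ℝ) : EReal) = ((C : ℝ) : EReal) := by
    rw [hFBEx, ← EReal.coe_sub]
  have hpart2 : FBE f g lam xh < FBE f g lam x - ((σ * ‖v‖ ^ 2 : ℝ) : EReal) := by
    rw [hCeq]
    calc FBE f g lam xh ≤ ((f xh + G : ℝ) : EReal) := hFBExh
      _ < ((C : ℝ) : EReal) := by exact_mod_cast hreal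
  refine ⟨hvne, hpart2, ?_⟩
  -- part 3: line search
  intro d
  have hClt : (⨅ y, ((R xh y : ℝ) : EReal) + g y) < ((C : ℝ) : EReal) := by
    rw [← hFBE xh, ← hCeq]; exact hpart2
  obtain ⟨y₀, hy₀⟩ := iInf_lt_iff.mp hClt
  have hy₀top : g y₀ ≠ ⊤ := by
    intro h
    rw [h] at hy₀
    simp at hy₀
  set a : ℝ := (g y₀).toReal with hadef
  have ha : (a : EReal) = g y₀ := EReal.coe_toReal hy₀top (hbot y₀)
  have hy₀r : R xh y₀ + a < C := by
    rw [← ha, ← EReal.coe_add] at hy₀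
    exact_mod_cast hy₀
  set ρ : En n → ℝ := fun z => f z + ⟪gradient f z, y₀ - z⟫ + ‖y₀ - z‖ ^ 2 / (2 * lam) + a
    with hρ
  have hρcont : Continuous ρ := by
    have h1 : Continuous (gradient f) := hlip.continuous
    have h2 : Continuous fun z : En n => ⟪gradient f z, y₀ - z⟫ :=
      h1.inner (continuous_const.sub continuous_id)
    have h3 : Continuous fun z : En n => ‖y₀ - z‖ ^ 2 / (2 * lam) :=
      (((continuous_const.sub continuous_id).norm.pow 2).div_const _)
    exact ((hf.continuous.add h2).add h3).add continuous_const
  have hopen : IsOpen {z : En n | ρ z < C} := isOpen_lt hρcont continuous_const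
  have hxhmem : xh ∈ {z : En n | ρ z < C} := hy₀r
  obtain ⟨ε, hε0, hball⟩ := Metric.isOpen_iff.mp hopen xh hxhmem
  refine ⟨ε / (‖d‖ + 1), by positivity, ?_⟩
  intro τ hτ0 hτub
  have hdist : dist (xh + τ • d) xh < ε := by
    rw [dist_eq_norm, add_sub_cancel_left, norm_smul, Real.norm_eq_abs, abs_of_pos hτ0]
    have hd1 : (0:ℝ) < ‖d‖ + 1 := by positivity
    calc τ * ‖d‖ ≤ τ * (‖d‖ + 1) :=
          mul_le_mul_of_nonneg_left (by linarith [norm_nonneg d]) hτ0.le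
      _ < ε / (‖d‖ + 1) * (‖d‖ + 1) := by exact mul_lt_mul_of_pos_right hτub hd1
      _ = ε := by field_simp
  have hρz : ρ (xh + τ • d) < C := hball hdist
  calc FBE f g lam (xh + τ • d) ≤ ((R (xh + τ • d) y₀ : ℝ) : EReal) + g y₀ := by
        rw [hFBE]; exact iInf_le _ y₀
    _ = ((ρ (xh + τ • d) : ℝ) : EReal) := by rw [← ha, ← EReal.coe_add]
    _ ≤ ((C : ℝ) : EReal) := by exact_mod_cast hρz.le
    _ = FBE f g lam x - ((σ * ‖v‖ ^ 2 : ℝ) : EReal) := hCeq.symm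
end
end

section
/- Consider the structured problem of minimizing φ = f + g, where f : ℝⁿ → ℝ is C²-smooth with ∇f Lipschitz continuous on ℝⁿ with modulus L_f > 0, and g : ℝⁿ → ℝ ∪ {+∞} is proper, lower semicontinuous, and prox-bounded with threshold λ_g. Run the generalized line-search proximal gradient method with parameters λ ∈ (0, min{1/L_f, λ_g}), σ ∈ (0, λ(1 − λL_f)/(2(1 + λL_f)²)), β ∈ (0,1): at step k, if x^k ∈ Prox_{λg}(x^k − λ∇f(x^k)) stop; otherwise take x̂^k ∈ Prox_{λg}(x^k − λ∇f(x^k)), v̂^k := ∇f(x̂^k) − ∇f(x^k) + (1/λ)(x^k − x̂^k), choose any direction d^k ∈ ℝⁿ, set τ_k = β^{m_k} with m_k the smallest nonnegative integer such that φ_λ(x̂^k + β^{m_k}d^k) ≤ φ_λ(x^k) − σ‖v̂^k‖², and set x^{k+1} := x̂^k + τ_k d^k. Then the sequence {x^k} is well-defined and (1/λ − L_f)‖x̂^k − x^k‖ ≤ ‖v̂^k‖ ≤ (1/λ + L_f)‖x̂^k − x^k‖ for all k. If inf φ > −∞, then {φ_λ(x^k)} converges, Σ_{k≥0}‖v̂^k‖²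 < ∞ and Σ_{k≥0}‖x̂^k − x^k‖² < ∞, so v̂^k → 0 and x̂^k − x^k → 0; moreover, every accumulation point x̄ of {x^k} is a λ-critical point of the problem (hence a λ′-critical point for every λ′ ∈ (0, λ]). -/
open Filter Topology

noncomputable section

open Paper

namespace Helper
variable {n : ℕ}

lemma ec_le_of_add_le {a : EReal} {r c : ℝ} (h : a + (r : EReal) ≤ (c : EReal)) :
    a ≤ ((c - r : ℝ) : EReal) := by
  induction a using EReal.rec with
  | bot => exact bot_le
  | coe a =>
      have : a + r ≤ c := by exact_mod_cast h
      exact_mod_cast (by linarith : a ≤ c - r)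
  | top => simp [EReal.top_add_coe] at h

lemma ec_lt_of_lt_add {a : EReal} {r c : ℝ} (h : (c : EReal) < a + (r : EReal)) :
    ((c - r : ℝ) : EReal) < a := by
  induction a using EReal.rec with
  | bot => simp [EReal.bot_add] at h
  | coe a =>
      have : c < a + r := by exact_mod_cast h
      exact_mod_cast (by linarith : c - r < a)
  | top => exact EReal.coe_lt_top _

lemma ec_le_add_of_le {a : EReal} {r c : ℝ} (h : a ≤ ((c - r : ℝ) : EReal)) :
    a + (r : EReal) ≤ (c : EReal) := by
  induction a using EReal.rec with
  | bot => simp [EReal.bot_add]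
  | coe a =>
      have : a ≤ c - r := by exact_mod_cast h
      exact_mod_cast (by linarith : a + r ≤ c)
  | top => exact absurd (top_le_iff.mp h) (EReal.coe_ne_top _)

lemma ec_add_ne_top {a : EReal} (ha : a ≠ ⊤) (r : ℝ) : a + (r : EReal) ≠ ⊤ := by
  induction a using EReal.rec with
  | bot => simp [EReal.bot_add]
  | coe a => exact_mod_cast EReal.coe_ne_top _
  | top => exact absurd rfl ha

lemma ec_add_ne_bot {a : EReal} (ha : a ≠ ⊥) (r : ℝ) : a + (r : EReal) ≠ ⊥ := by
  induction a using EReal.rec with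
  | bot => exact absurd rfl ha
  | coe a => exact_mod_cast EReal.coe_ne_bot _
  | top => simp [EReal.top_add_coe]

lemma ec_coe_sub_le {a : EReal} {r c : ℝ} (h : (c : EReal) ≤ a + (r : EReal)) :
    ((c - r : ℝ) : EReal) ≤ a := by
  induction a using EReal.rec with
  | bot => simp [EReal.bot_add] at h
  | coe a =>
      have : c ≤ a + r := by exact_mod_cast h
      exact_mod_cast (by linarith : c - r ≤ a)
  | top => exact le_top

/-- Existence of proximal points below the prox-boundedness threshold. -/
lemma prox_nonempty {g : En n → EReal} (hproper : Proper g) (hlsc : LowerSemicontinuous g)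
    {lam : ℝ} (hlam : 0 < lam) (hlt : (lam : EReal) < proxThreshold g) (u : En n) :
    (proxSet g lam u).Nonempty := by
  -- get a quadratic lower bound on g
  obtain ⟨l, hlS, hll⟩ := lt_sSup_iff.mp hlt
  obtain ⟨lam0, rfl, hlam0, x0, hm⟩ := hlS
  have hlamlt : lam < lam0 := by exact_mod_cast hll
  obtain ⟨c, _, hc⟩ := EReal.exists_between_coe_real (Ne.bot_lt hm)
  have hlow : ∀ y : En n, ((c - ‖y - x0‖ ^ 2 / (2 * lam0) : ℝ) : EReal) ≤ g y := by
    intro y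
    have h1 : (c : EReal) ≤ g y + ((‖y - x0‖ ^ 2 / (2 * lam0) : ℝ) : EReal) :=
      le_trans hc.le (iInf_le _ y)
    exact ec_coe_sub_le h1
  obtain ⟨y1, hy1⟩ := hproper.1
  set F : En n → EReal := fun y => g y + ((‖y - u‖ ^ 2 / (2 * lam) : ℝ) : EReal) with hF
  -- the value at y1 is finite
  have hFy1top : F y1 ≠ ⊤ := Helper.ec_add_ne_top hy1 _
  have hFy1bot : F y1 ≠ ⊥ := Helper.ec_add_ne_bot (hproper.2 y1) _
  set b : ℝ := (F y1).toReal with hb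
  have hFy1 : F y1 = (b : EReal) := (EReal.coe_toReal hFy1top hFy1bot).symm
  -- coercivity constants
  set γ : ℝ := 1 / (2 * lam0) with hγ
  set α : ℝ := 1 / (2 * lam) with hα
  have hγpos : 0 < γ := by positivity
  have hαγ : 0 < α - γ := by
    have : γ < α := by
      apply div_lt_div_of_pos_left one_pos (by positivity)
      linarith
    linarith
  set D : ℝ := ‖u - x0‖ with hD
  have hDnn : 0 ≤ D := norm_nonneg _
  set R : ℝ := max (‖y1 - u‖) (max 1 ((γ * (2 * D + D ^ 2) + |c| + |b| + 1) / (α - γ))) with hR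
  -- quadratic minorant of F
  have hq : ∀ y : En n, ((c - ‖y - x0‖ ^ 2 * γ + ‖y - u‖ ^ 2 * α : ℝ) : EReal) ≤ F y := by
    intro y
    have h2 : ((c - ‖y - x0‖ ^ 2 / (2 * lam0) : ℝ) : EReal) + ((‖y - u‖ ^ 2 / (2 * lam) : ℝ) : EReal)
        ≤ F y := add_le_add_left (hlow y) _
    rw [← EReal.coe_add] at h2
    convert h2 using 2
    rw [hγ, hα]; ring
  -- outside the ball of radius R, F is bigger than b
  have hout : ∀ y : En n, R < ‖y - u‖ → (b : EReal) < F y := by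
    intro y hy
    refine lt_of_lt_of_le ?_ (hq y)
    rw [EReal.coe_lt_coe_iff]
    have ht1 : (1:ℝ) ≤ ‖y - u‖ := le_trans (le_max_of_le_right (le_max_left _ _)) hy.le
    have ht2 : (γ * (2 * D + D ^ 2) + |c| + |b| + 1) / (α - γ) ≤ ‖y - u‖ :=
      le_trans (le_max_of_le_right (le_max_right _ _)) hy.le
    have ht3 : γ * (2 * D + D ^ 2) + |c| + |b| + 1 ≤ (α - γ) * ‖y - u‖ := by
      rw [div_le_iff₀ hαγ] at ht2; linarith [ht2]
    have htri : ‖y - x0‖ ≤ ‖y - u‖ + D := by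
      have : y - x0 = (y - u) + (u - x0) := by abel
      rw [this, hD]; exact norm_add_le _ _
    have hsq : ‖y - x0‖ ^ 2 ≤ (‖y - u‖ + D) ^ 2 := by
      apply sq_le_sq' <;> nlinarith [norm_nonneg (y - x0), norm_nonneg (y - u)]
    have h0t : (0:ℝ) ≤ ‖y - u‖ := norm_nonneg _
    have e1 : ‖y - x0‖ ^ 2 * γ ≤ (‖y - u‖ + D) ^ 2 * γ := mul_le_mul_of_nonneg_right hsq hγpos.le
    have e2 : (γ * (2 * D + D ^ 2) + |c| + |b| + 1) * ‖y - u‖ ≤ ((α - γ) * ‖y - u‖) * ‖y - u‖ :=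
      mul_le_mul_of_nonneg_right ht3 h0t
    nlinarith [le_abs_self c, le_abs_self b, neg_abs_le c, neg_abs_le b, abs_nonneg c, abs_nonneg b,
      mul_nonneg (mul_nonneg hγpos.le hDnn) (sub_nonneg.2 ht1),
      mul_nonneg (mul_nonneg hγpos.le (sq_nonneg D)) (sub_nonneg.2 ht1),
      mul_nonneg (abs_nonneg c) (sub_nonneg.2 ht1),
      mul_nonneg (abs_nonneg b) (sub_nonneg.2 ht1)]
  -- minimize over the compact ball
  set K : Set (En n) := Metric.closedBall u R with hK
  have hKcpt : IsCompact K := isCompact_closedBall u R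
  have hy1K : y1 ∈ K := by
    rw [hK, Metric.mem_closedBall, dist_eq_norm]
    exact le_max_left _ _
  set m : EReal := ⨅ y : K, F y with hm'
  have hmle : m ≤ (b : EReal) := le_trans (iInf_le _ ⟨y1, hy1K⟩) hFy1.le
  have hmlow : ((c - (R + D) ^ 2 * γ : ℝ) : EReal) ≤ m := by
    apply le_iInf
    rintro ⟨y, hyK⟩
    refine le_trans ?_ (hq y)
    rw [EReal.coe_le_coe_iff]
    have hyR : ‖y - u‖ ≤ R := by rwa [hK, Metric.mem_closedBall, dist_eq_norm] at hyK
    have h0R : (0:ℝ) ≤ R := le_trans (norm_nonneg _) hyR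
    have htri : ‖y - x0‖ ≤ R + D := by
      have : y - x0 = (y - u) + (u - x0) := by abel
      rw [this]
      exact le_trans (norm_add_le _ _) (by rw [hD]; linarith)
    have : ‖y - x0‖ ^ 2 ≤ (R + D) ^ 2 := by
      apply sq_le_sq' <;> nlinarith [norm_nonneg (y - x0)]
    nlinarith [sq_nonneg (‖y - u‖), hγpos]
  have hmbot : m ≠ ⊥ := fun h => by rw [h] at hmlow; exact absurd (le_bot_iff.mp hmlow) (EReal.coe_ne_bot _)
  have hmtop : m ≠ ⊤ := fun h => by rw [h] at hmle; exact absurd (top_le_iff.mp hmle) (EReal.coe_ne_top _)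
  set mr : ℝ := m.toReal with hmr
  have hmeq : m = (mr : EReal) := (EReal.coe_toReal hmtop hmbot).symm
  -- minimizing sequence
  have hseq : ∀ j : ℕ, ∃ y : En n, y ∈ K ∧ F y < ((mr + 1 / (j + 1) : ℝ) : EReal) := by
    intro j
    have hlt2 : m < ((mr + 1 / (j + 1) : ℝ) : EReal) := by
      rw [hmeq, EReal.coe_lt_coe_iff]
      have : (0:ℝ) < 1 / (j + 1) := by positivity
      linarith
    obtain ⟨⟨y, hyK⟩, hy⟩ := iInf_lt_iff.mp hlt2
    exact ⟨y, hyK, hy⟩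
  choose ys hysK hysF using hseq
  obtain ⟨xb, hxbK, ψ, hψ, hconv⟩ := hKcpt.tendsto_subseq hysK
  -- the limit point is a minimizer over K
  have hFxb : F xb ≤ m := by
    rw [hmeq]
    by_contra hcon
    push_neg at hcon
    have hgxb : ((mr - ‖xb - u‖ ^ 2 / (2 * lam) : ℝ) : EReal) < g xb := Helper.ec_lt_of_lt_add hcon
    obtain ⟨b', hb'1, hb'2⟩ := EReal.exists_between_coe_real hgxb
    have hev1 : ∀ᶠ j in atTop, (b' : EReal) < g (ys (ψ j)) :=
      hconv.eventually (hlsc xb (b' : EReal) hb'2)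
    have hgys : ∀ k, g (ys k) ≤ ((mr + 1 / (k + 1) - ‖ys k - u‖ ^ 2 / (2 * lam) : ℝ) : EReal) :=
      fun k => Helper.ec_le_of_add_le (hysF k).le
    have hrconv : Tendsto (fun j => mr + 1 / ((ψ j : ℝ) + 1) - ‖ys (ψ j) - u‖ ^ 2 / (2 * lam))
        atTop (𝓝 (mr + 0 - ‖xb - u‖ ^ 2 / (2 * lam))) := by
      apply Tendsto.sub
      · apply Tendsto.const_add
        have h1 : Tendsto (fun j : ℕ => 1 / ((j : ℝ) + 1)) atTop (𝓝 0) :=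
          tendsto_one_div_add_atTop_nhds_zero_nat
        exact h1.comp hψ.tendsto_atTop
      · have hcont : Continuous fun y : En n => ‖y - u‖ ^ 2 / (2 * lam) := by
          apply Continuous.div_const
          exact (continuous_norm.comp (continuous_id.sub continuous_const)).pow 2
        exact (hcont.tendsto xb).comp hconv
    have hlim : mr + 0 - ‖xb - u‖ ^ 2 / (2 * lam) < b' := by
      rw [add_zero]; exact_mod_cast hb'1
    have hev2 := hrconv.eventually_lt_const hlim
    obtain ⟨j, h1, h2⟩ := (hev1.and hev2).exists
    have h4 : ((mr + 1 / ((ψ j : ℝ) + 1) - ‖ys (ψ j) - u‖ ^ 2 / (2 * lam) : ℝ) : EReal)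
        < (b' : EReal) := by exact_mod_cast h2
    exact lt_asymm h1 (lt_of_le_of_lt (hgys (ψ j)) h4)
  refine ⟨xb, fun z => ?_⟩
  by_cases hz : z ∈ K
  · exact le_trans hFxb (iInf_le (fun y : K => F y) ⟨z, hz⟩)
  · have : R < ‖z - u‖ := by
      rw [hK, Metric.mem_closedBall, dist_eq_norm, not_le] at hz
      exact hz
    exact le_trans hFxb (le_trans hmle (hout z this).le)

lemma inner_gradient_eq {f : En n → ℝ} (hf : Differentiable ℝ f) (z d : En n) :
    ⟪gradient f z, d⟫ = fderiv ℝ f z d := by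
  simp [gradient, InnerProductSpace.toDual_apply_apply]

lemma hasDerivAt_line {f : En n → ℝ} (hf : Differentiable ℝ f) (x d : En n) (t : ℝ) :
    HasDerivAt (fun s : ℝ => f (x + s • d)) ⟪gradient f (x + t • d), d⟫ t := by
  have h1 : HasDerivAt (fun s : ℝ => x + s • d) d t := by
    simpa using ((hasDerivAt_id t).smul_const d).const_add x
  have h2 := (hf (x + t • d)).hasFDerivAt.comp_hasDerivAt t h1
  rw [inner_gradient_eq hf]
  exact h2

/-- Descent lemma. -/
lemma descent {f : En n → ℝ} {Lf : ℝ} (hf : Differentiable ℝ f) (hLf : 0 ≤ Lf)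
    (hlip : LipschitzWith (Real.toNNReal Lf) (gradient f)) (x y : En n) :
    f y ≤ f x + ⟪gradient f x, y - x⟫ + Lf / 2 * ‖y - x‖ ^ 2 := by
  set d := y - x with hd
  have key : ∀ t : ℝ, t ∈ Set.Icc (0:ℝ) 1 →
      f (x + t • d) ≤ f x + t * ⟪gradient f x, d⟫ + Lf / 2 * t ^ 2 * ‖d‖ ^ 2 := by
    intro t ht
    set φ : ℝ → ℝ := fun s => f (x + s • d) - s * ⟪gradient f x, d⟫ - Lf / 2 * s ^ 2 * ‖d‖ ^ 2 with hφ
    have hder : ∀ s : ℝ, HasDerivAt φ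
        (⟪gradient f (x + s • d), d⟫ - ⟪gradient f x, d⟫ - Lf * s * ‖d‖ ^ 2) s := by
      intro s
      have h1 := hasDerivAt_line hf x d s
      have h2 : HasDerivAt (fun s : ℝ => s * ⟪gradient f x, d⟫) ⟪gradient f x, d⟫ s := by
        simpa using (hasDerivAt_id s).mul_const ⟪gradient f x, d⟫
      have h3 : HasDerivAt (fun s : ℝ => Lf / 2 * s ^ 2 * ‖d‖ ^ 2) (Lf * s * ‖d‖ ^ 2) s := by
        have := ((hasDerivAt_pow 2 s).const_mul (Lf / 2)).mul_const (‖d‖ ^ 2)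
        exact this.congr_deriv (by push_cast; ring)
      exact (h1.sub h2).sub h3
    have hmono : AntitoneOn φ (Set.Icc 0 1) := by
      apply antitoneOn_of_deriv_nonpos (convex_Icc 0 1)
      · exact (Continuous.continuousOn (by
          have : Continuous φ := by
            have : Continuous fun s : ℝ => f (x + s • d) :=
              hf.continuous.comp (by continuity)
            rw [hφ]
            exact (this.sub (by fun_prop)).sub (by fun_prop)
          exact this))
      · intro s _
        exact (hder s).differentiableAt.differentiableWithinAt
      · intro s hs
        rw [interior_Icc] at hs
        rw [(hder s).deriv]
        have hb : ⟪gradient f (x + s • d) - gradient f x, d⟫ ≤ Lf * s * ‖d‖ ^ 2 := by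
          calc ⟪gradient f (x + s • d) - gradient f x, d⟫
              ≤ ‖gradient f (x + s • d) - gradient f x‖ * ‖d‖ := real_inner_le_norm _ _
            _ ≤ Lf * s * ‖d‖ ^ 2 := by
                have h4 : ‖gradient f (x + s • d) - gradient f x‖ ≤ Lf * (s * ‖d‖) := by
                  have := hlip.dist_le_mul (x + s • d) x
                  rw [Real.coe_toNNReal _ hLf, dist_eq_norm, dist_eq_norm] at this
                  have he : x + s • d - x = s • d := by abel
                  rw [he, norm_smul, Real.norm_eq_abs, abs_of_pos hs.1] at this
                  exact this
                nlinarith [norm_nonneg d, norm_nonneg (gradient f (x + s • d) - gradient f x), hs.1.le]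
        rw [inner_sub_left] at hb
        linarith
    have h01 := hmono (Set.left_mem_Icc.2 zero_le_one) ht ht.1
    simp only [hφ, zero_smul, add_zero, zero_mul, zero_pow, mul_zero, sub_zero,
      ne_eq, OfNat.ofNat_ne_zero, not_false_eq_true] at h01
    linarith [h01]
  have := key 1 (Set.right_mem_Icc.2 zero_le_one)
  simpa [hd] using this


lemma FBE_ne_top {f : En n → ℝ} {g : En n → EReal} {lam : ℝ} (hproper : Proper g) (x : En n) :
    FBE f g lam x ≠ ⊤ := by
  obtain ⟨y1, hy1⟩ := hproper.1
  intro htop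
  have h1 : (⊤ : EReal) ≤ ((f x + ⟪gradient f x, y1 - x⟫ + ‖y1 - x‖ ^ 2 / (2 * lam) : ℝ) : EReal) + g y1 :=
    htop ▸ iInf_le _ y1
  rw [add_comm] at h1
  exact ec_add_ne_top hy1 _ (top_le_iff.mp h1)

lemma FBE_ge {f : En n → ℝ} {g : En n → EReal} {Lf lam : ℝ} (hdiff : Differentiable ℝ f)
    (hLf : 0 < Lf) (hlip : LipschitzWith (Real.toNNReal Lf) (gradient f))
    (hlam : 0 < lam) (hlam2 : lam < 1 / Lf) (x : En n) :
    (⨅ y, phiSum f g y) ≤ FBE f g lam x := by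
  apply le_iInf; intro y
  refine le_trans (le_trans (iInf_le _ y) ?_) (le_refl (((f x + ⟪gradient f x, y - x⟫ + ‖y - x‖ ^ 2 / (2 * lam) : ℝ) : EReal) + g y))
  rw [phiSum]
  apply add_le_add_left
  rw [EReal.coe_le_coe_iff]
  have hd := descent hdiff hLf.le hlip x y
  have hLl : Lf < 1 / lam := by
    rw [lt_div_iff₀ hLf] at hlam2
    rw [lt_div_iff₀ hlam]
    linarith [mul_comm lam Lf]
  have h3 : (0:ℝ) ≤ 1 / (2 * lam) - Lf / 2 := by
    have h4 : 1 / (2 * lam) = (1 / lam) / 2 := by ring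
    linarith
  have h2 : ‖y - x‖ ^ 2 / (2 * lam) = ‖y - x‖ ^ 2 * (1 / (2 * lam)) := by ring
  nlinarith [sq_nonneg ‖y - x‖]

end Helper

theorem statement15 {n : ℕ} (f : En n → ℝ) (g : En n → EReal)
    (Lf : ℝ) (lamg : EReal) (lam σ β : ℝ)
    (x xh vh d : ℕ → En n) (τ : ℕ → ℝ) (m : ℕ → ℕ)
    (hf : ContDiff ℝ 2 f) (hLf : 0 < Lf)
    (hlip : LipschitzWith (Real.toNNReal Lf) (gradient f))
    (hproper : Proper g) (hlsc : LowerSemicontinuous g)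
    (hpb : ProxBounded g) (hth : lamg = proxThreshold g)
    (hlam : 0 < lam ∧ lam < 1 / Lf ∧ (lam : EReal) < lamg)
    (hσ : 0 < σ ∧ σ < lam * (1 - lam * Lf) / (2 * (1 + lam * Lf) ^ 2))
    (hβ : 0 < β ∧ β < 1)
    -- the algorithm does not stop:
    (hnostop : ∀ k, ¬ lamCritical f g lam (x k))
    (hxh : ∀ k, xh k ∈ proxSet g lam (x k - lam • gradient f (x k)))
    (hvh : ∀ k, vh k =
      gradient f (xh k) - gradient f (x k) + (1 / lam) • (x k - xh k))
    (hτ : ∀ k, τ k = β ^ m k)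
    (harmijo : ∀ k, FBE f g lam (xh k + τ k • d k) ≤
      FBE f g lam (x k) - ((σ * ‖vh k‖ ^ 2 : ℝ) : EReal))
    (hmk : ∀ k, ∀ j < m k, ¬ (FBE f g lam (xh k + β ^ j • d k) ≤
      FBE f g lam (x k) - ((σ * ‖vh k‖ ^ 2 : ℝ) : EReal)))
    (hupd : ∀ k, x (k + 1) = xh k + τ k • d k) :
    -- well-definedness of the scheme
    (∀ z : En n, (proxSet g lam (z - lam • gradient f z)).Nonempty) ∧
    (∀ k, ∃ m' : ℕ, FBE f g lam (xh k + β ^ m' • d k) ≤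
      FBE f g lam (x k) - ((σ * ‖vh k‖ ^ 2 : ℝ) : EReal)) ∧
    -- the two-sided estimates
    (∀ k, (1 / lam - Lf) * ‖xh k - x k‖ ≤ ‖vh k‖ ∧
      ‖vh k‖ ≤ (1 / lam + Lf) * ‖xh k - x k‖) ∧
    -- consequences when inf φ > -∞
    ((⊥ : EReal) < ⨅ y : En n, phiSum f g y →
      (∃ c : EReal, Tendsto (fun k => FBE f g lam (x k)) atTop (𝓝 c)) ∧
      Summable (fun k => ‖vh k‖ ^ 2) ∧
      Summable (fun k => ‖xh k - x k‖ ^ 2) ∧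
      Tendsto vh atTop (𝓝 0) ∧
      Tendsto (fun k => xh k - x k) atTop (𝓝 0) ∧
      ∀ xbar : En n, MapClusterPt xbar atTop x →
        lamCritical f g lam xbar ∧
          ∀ lam' : ℝ, 0 < lam' → lam' ≤ lam → lamCritical f g lam' xbar) := by
  obtain ⟨hlam0, hlam1, hlam2⟩ := hlam
  have hdiff : Differentiable ℝ f := hf.differentiable two_ne_zero
  have hLl : Lf < 1 / lam := by
    rw [lt_div_iff₀ hLf] at hlam1
    rw [lt_div_iff₀ hlam0]
    linarith [mul_comm lam Lf]
  have hδ : 0 < 1 / lam - Lf := by linarith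
  -- part 1
  have part1 : ∀ z : En n, (proxSet g lam (z - lam • gradient f z)).Nonempty := fun z =>
    Helper.prox_nonempty hproper hlsc hlam0 (hth ▸ hlam2) _
  -- part 2
  have part2 : ∀ k, ∃ m' : ℕ, FBE f g lam (xh k + β ^ m' • d k) ≤
      FBE f g lam (x k) - ((σ * ‖vh k‖ ^ 2 : ℝ) : EReal) := fun k =>
    ⟨m k, by rw [← hτ k]; exact harmijo k⟩
  -- part 3
  have est : ∀ k, (1 / lam - Lf) * ‖xh k - x k‖ ≤ ‖vh k‖ ∧
      ‖vh k‖ ≤ (1 / lam + Lf) * ‖xh k - x k‖ := by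
    intro k
    have hlipk : ‖gradient f (xh k) - gradient f (x k)‖ ≤ Lf * ‖xh k - x k‖ := by
      have h := hlip.dist_le_mul (xh k) (x k)
      rw [Real.coe_toNNReal _ hLf.le, dist_eq_norm, dist_eq_norm] at h
      exact h
    have hsn : ‖(1 / lam) • (x k - xh k)‖ = (1 / lam) * ‖xh k - x k‖ := by
      rw [norm_smul, Real.norm_eq_abs, abs_of_pos (by positivity), norm_sub_rev]
    constructor
    · rw [hvh k]
      have htr := norm_sub_le
        (gradient f (xh k) - gradient f (x k) + (1 / lam) • (x k - xh k))
        (gradient f (xh k) - gradient f (x k))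
      have h2 : gradient f (xh k) - gradient f (x k) + (1 / lam) • (x k - xh k)
          - (gradient f (xh k) - gradient f (x k)) = (1 / lam) • (x k - xh k) := by abel
      rw [h2, hsn] at htr
      linarith
    · rw [hvh k]
      have := norm_add_le (gradient f (xh k) - gradient f (x k)) ((1 / lam) • (x k - xh k))
      rw [hsn] at this
      linarith
  refine ⟨part1, part2, est, ?_⟩
  intro hinf
  obtain ⟨B, _, hB2⟩ := EReal.exists_between_coe_real hinf
  have hFBEge : ∀ z, (B : EReal) ≤ FBE f g lam z := fun z =>
    le_trans hB2.le (Helper.FBE_ge hdiff hLf hlip hlam0 hlam1 z)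
  have hFBEbot : ∀ z, FBE f g lam z ≠ ⊥ := by
    intro z hb
    have := hFBEge z
    rw [hb, le_bot_iff] at this
    exact EReal.coe_ne_bot _ this
  set a : ℕ → ℝ := fun k => (FBE f g lam (x k)).toReal with ha
  have haeq : ∀ k, FBE f g lam (x k) = ((a k : ℝ) : EReal) := fun k =>
    (EReal.coe_toReal (Helper.FBE_ne_top hproper _) (hFBEbot _)).symm
  have hstep : ∀ k, a (k + 1) + σ * ‖vh k‖ ^ 2 ≤ a k := by
    intro k
    have h := harmijo k
    rw [← hupd k, haeq k, haeq (k + 1), ← EReal.coe_sub, EReal.coe_le_coe_iff] at h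
    linarith
  have hBa : ∀ k, B ≤ a k := by
    intro k
    have := hFBEge (x k)
    rw [haeq k, EReal.coe_le_coe_iff] at this
    exact this
  have hterm : ∀ k, (0:ℝ) ≤ σ * ‖vh k‖ ^ 2 := fun k => mul_nonneg hσ.1.le (sq_nonneg _)
  have hanti : Antitone a := antitone_nat_of_succ_le fun k => by linarith [hstep k, hterm k]
  have hbdd : BddBelow (Set.range a) := ⟨B, by rintro r ⟨k, rfl⟩; exact hBa k⟩
  have hconva : Tendsto a atTop (𝓝 (⨅ k, a k)) := tendsto_atTop_ciInf hanti hbdd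
  -- telescoping bound
  have htel : ∀ N, ∑ k ∈ Finset.range N, σ * ‖vh k‖ ^ 2 ≤ a 0 - a N := by
    intro N
    induction N with
    | zero => simp
    | succ N ih =>
        rw [Finset.sum_range_succ]
        linarith [hstep N]
  have hsumσ : Summable (fun k => σ * ‖vh k‖ ^ 2) :=
    summable_of_sum_range_le (c := a 0 - B) hterm
      (fun N => le_trans (htel N) (by linarith [hBa N]))
  have hsumv : Summable (fun k => ‖vh k‖ ^ 2) := by
    have h := hsumσ.mul_left σ⁻¹
    have he : (fun k => σ⁻¹ * (σ * ‖vh k‖ ^ 2)) = fun k => ‖vh k‖ ^ 2 := by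
      funext k; rw [← mul_assoc, inv_mul_cancel₀ hσ.1.ne', one_mul]
    rwa [he] at h
  have hsumx : Summable (fun k => ‖xh k - x k‖ ^ 2) := by
    apply Summable.of_nonneg_of_le (fun k => sq_nonneg _) _ (hsumv.mul_left ((1 / lam - Lf)⁻¹ ^ 2))
    intro k
    have h1 := (est k).1
    have h2 : (0:ℝ) ≤ ‖xh k - x k‖ := norm_nonneg _
    have h4 : (1 / lam - Lf) ^ 2 * ‖xh k - x k‖ ^ 2 ≤ ‖vh k‖ ^ 2 := by
      nlinarith [norm_nonneg (vh k), mul_nonneg hδ.le h2]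
    have hδne : (1 / lam - Lf) ≠ 0 := ne_of_gt hδ
    calc ‖xh k - x k‖ ^ 2
        = (1 / lam - Lf)⁻¹ ^ 2 * ((1 / lam - Lf) ^ 2 * ‖xh k - x k‖ ^ 2) := by
          rw [← mul_assoc, ← mul_pow, inv_mul_cancel₀ hδne, one_pow, one_mul]
      _ ≤ (1 / lam - Lf)⁻¹ ^ 2 * ‖vh k‖ ^ 2 :=
          mul_le_mul_of_nonneg_left h4 (by positivity)
  have hnv : Tendsto (fun k => ‖vh k‖) atTop (𝓝 0) := by
    have h1 := hsumv.tendsto_atTop_zero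
    have h2 := (Real.continuous_sqrt.tendsto 0).comp h1
    have he : (fun k => Real.sqrt (‖vh k‖ ^ 2)) = fun k => ‖vh k‖ :=
      funext fun k => Real.sqrt_sq (norm_nonneg _)
    rw [Function.comp_def, he, Real.sqrt_zero] at h2
    exact h2
  have hv0 : Tendsto vh atTop (𝓝 0) := tendsto_zero_iff_norm_tendsto_zero.mpr hnv
  have hnx : Tendsto (fun k => ‖xh k - x k‖) atTop (𝓝 0) := by
    have h1 := hsumx.tendsto_atTop_zero
    have h2 := (Real.continuous_sqrt.tendsto 0).comp h1
    have he : (fun k => Real.sqrt (‖xh k - x k‖ ^ 2)) = fun k => ‖xh k - x k‖ :=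
      funext fun k => Real.sqrt_sq (norm_nonneg _)
    rw [Function.comp_def, he, Real.sqrt_zero] at h2
    exact h2
  have hx0 : Tendsto (fun k => xh k - x k) atTop (𝓝 0) := by
    apply tendsto_zero_iff_norm_tendsto_zero.mpr
    exact hnx
  refine ⟨⟨((⨅ k, a k : ℝ) : EReal), ?_⟩, hsumv, hsumx, hv0, hx0, ?_⟩
  · have h := EReal.tendsto_coe.mpr hconva
    have he : (fun k => FBE f g lam (x k)) = fun k => ((a k : ℝ) : EReal) :=
      funext fun k => haeq k
    rw [he]
    exact h
  -- accumulation points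
  intro xbar hcl
  obtain ⟨ψ, hψ, hconvx⟩ := TopologicalSpace.FirstCountableTopology.tendsto_subseq hcl
  have hconvxh : Tendsto (fun j => xh (ψ j)) atTop (𝓝 xbar) := by
    have h2 : Tendsto (fun j => xh (ψ j) - x (ψ j)) atTop (𝓝 0) :=
      hx0.comp hψ.tendsto_atTop
    have h3 := hconvx.add h2
    rw [add_zero] at h3
    have he : (fun j => (x ∘ ψ) j + (xh (ψ j) - x (ψ j))) = fun j => xh (ψ j) := by
      funext j; simp [Function.comp]
    rwa [he] at h3
  have hgc : Continuous (gradient f) := hlip.continuous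
  set ub : En n := xbar - lam • gradient f xbar with hub
  have hu : Tendsto (fun j => x (ψ j) - lam • gradient f (x (ψ j))) atTop (𝓝 ub) := by
    apply Tendsto.sub hconvx
    exact (((hgc.tendsto xbar).comp hconvx).const_smul lam)
  -- criticality at lam
  have hcrit : lamCritical f g lam xbar := by
    simp only [lamCritical, proxSet, Set.mem_setOf_eq]
    intro z
    by_cases hz : g z = ⊤
    · rw [hz]
      rw [EReal.top_add_of_ne_bot (EReal.coe_ne_bot _)]
      exact le_top
    · set gz : ℝ := (g z).toReal with hgz
      have hgze : g z = (gz : EReal) := (EReal.coe_toReal hz (hproper.2 z)).symm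
      set uj : ℕ → En n := fun j => x (ψ j) - lam • gradient f (x (ψ j)) with huj
      have hprox : ∀ j, g (xh (ψ j)) ≤
          ((gz + ‖z - uj j‖ ^ 2 / (2 * lam) - ‖xh (ψ j) - uj j‖ ^ 2 / (2 * lam) : ℝ) : EReal) := by
        intro j
        apply Helper.ec_le_of_add_le
        have h := hxh (ψ j) z
        rw [hgze, ← EReal.coe_add] at h
        exact h
      set ρ : ℕ → ℝ := fun j =>
        gz + ‖z - uj j‖ ^ 2 / (2 * lam) - ‖xh (ψ j) - uj j‖ ^ 2 / (2 * lam) with hρ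
      have hρconv : Tendsto ρ atTop
          (𝓝 (gz + ‖z - ub‖ ^ 2 / (2 * lam) - ‖xbar - ub‖ ^ 2 / (2 * lam))) := by
        apply Tendsto.sub
        · apply Tendsto.const_add
          apply Tendsto.div_const
          exact ((continuous_norm.tendsto _).comp ((tendsto_const_nhds).sub hu)).pow 2
        · apply Tendsto.div_const
          exact ((continuous_norm.tendsto _).comp (hconvxh.sub hu)).pow 2
      set ρb : ℝ := gz + ‖z - ub‖ ^ 2 / (2 * lam) - ‖xbar - ub‖ ^ 2 / (2 * lam) with hρb
      have hgxb : g xbar ≤ (ρb : EReal) := by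
        by_contra hcon
        push_neg at hcon
        obtain ⟨b', hb'1, hb'2⟩ := EReal.exists_between_coe_real hcon
        have hev1 : ∀ᶠ j in atTop, (b' : EReal) < g (xh (ψ j)) :=
          hconvxh.eventually (hlsc xbar (b' : EReal) hb'2)
        have hev2 : ∀ᶠ j in atTop, ρ j < b' :=
          hρconv.eventually_lt_const (by exact_mod_cast hb'1)
        obtain ⟨j, h1, h2⟩ := (hev1.and hev2).exists
        have h4 : ((ρ j : ℝ) : EReal) < (b' : EReal) := by exact_mod_cast h2
        exact lt_asymm h1 (lt_of_le_of_lt (hprox j) h4)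
      have hfin : g xbar ≤ (((gz + ‖z - ub‖ ^ 2 / (2 * lam)) - ‖xbar - ub‖ ^ 2 / (2 * lam) : ℝ) : EReal) := by
        convert hgxb using 3
      have h5 := Helper.ec_le_add_of_le hfin
      rw [EReal.coe_add] at h5
      rw [hgze]
      exact h5
  refine ⟨hcrit, ?_⟩
  -- lam' criticality
  intro lam' hlam'0 hlam'le
  have hgxbtop : g xbar ≠ ⊤ := by
    obtain ⟨y1, hy1⟩ := hproper.1
    intro htop
    have h := hcrit y1
    rw [htop, EReal.top_add_of_ne_bot (EReal.coe_ne_bot _), top_le_iff] at h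
    exact Helper.ec_add_ne_top hy1 _ h
  set gx : ℝ := (g xbar).toReal with hgx
  have hgxe : g xbar = (gx : EReal) := (EReal.coe_toReal hgxbtop (hproper.2 xbar)).symm
  simp only [lamCritical, proxSet, Set.mem_setOf_eq]
  intro z
  by_cases hz : g z = ⊤
  · rw [hz, EReal.top_add_of_ne_bot (EReal.coe_ne_bot _)]
    exact le_top
  · set gz : ℝ := (g z).toReal with hgz
    have hgze : g z = (gz : EReal) := (EReal.coe_toReal hz (hproper.2 z)).symm
    have h := hcrit z
    rw [hgxe, hgze, ← EReal.coe_add, ← EReal.coe_add, EReal.coe_le_coe_iff] at h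
    rw [hgxe, hgze, ← EReal.coe_add, ← EReal.coe_add, EReal.coe_le_coe_iff]
    set v : En n := gradient f xbar with hv
    have e1 : ∀ t : ℝ, xbar - (xbar - t • v) = t • v := fun t => by abel
    have e2 : ∀ t : ℝ, z - (xbar - t • v) = (z - xbar) + t • v := fun t => by abel
    rw [e1, e2] at h
    rw [e1, e2]
    set w : En n := z - xbar with hw
    have hexp : ∀ t : ℝ, ‖w + t • v‖ ^ 2 = ‖w‖ ^ 2 + 2 * (t * ⟪w, v⟫) + t ^ 2 * ‖v‖ ^ 2 := by
      intro t
      rw [norm_add_sq_real, real_inner_smul_right, norm_smul, Real.norm_eq_abs, mul_pow, sq_abs]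
    have hsm : ∀ t : ℝ, 0 ≤ t → ‖t • v‖ ^ 2 = t ^ 2 * ‖v‖ ^ 2 := by
      intro t ht
      rw [norm_smul, Real.norm_eq_abs, mul_pow, sq_abs]
    rw [hexp, hsm lam hlam0.le] at h
    rw [hexp, hsm lam' hlam'0.le]
    -- reduce to real arithmetic
    have hkey : gx ≤ gz + ‖w‖ ^ 2 / (2 * lam) + ⟪w, v⟫ := by
      have hl : lam ^ 2 * ‖v‖ ^ 2 / (2 * lam) = lam * ‖v‖ ^ 2 / 2 := by
        field_simp
      have hq : (‖w‖ ^ 2 + 2 * (lam * ⟪w, v⟫) + lam ^ 2 * ‖v‖ ^ 2) / (2 * lam)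
          = ‖w‖ ^ 2 / (2 * lam) + ⟪w, v⟫ + lam * ‖v‖ ^ 2 / 2 := by
        field_simp
      rw [hl, hq] at h
      linarith
    have hmono : ‖w‖ ^ 2 / (2 * lam) ≤ ‖w‖ ^ 2 / (2 * lam') := by
      apply div_le_div_of_nonneg_left (sq_nonneg _) (by positivity)
      linarith
    have hl' : lam' ^ 2 * ‖v‖ ^ 2 / (2 * lam') = lam' * ‖v‖ ^ 2 / 2 := by
      field_simp
    have hq' : (‖w‖ ^ 2 + 2 * (lam' * ⟪w, v⟫) + lam' ^ 2 * ‖v‖ ^ 2) / (2 * lam')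
        = ‖w‖ ^ 2 / (2 * lam') + ⟪w, v⟫ + lam' * ‖v‖ ^ 2 / 2 := by
      field_simp
    rw [hl', hq']
    linarith
end
end

section
/- Let μ₀ > 0 and let g : ℝⁿ → ℝ be g(x) = μ₀‖x‖₀, where ‖x‖₀ is the number of nonzero components of x. Then for every x ∈ ℝⁿ the limiting subdifferential of g is ∂g(x) = {v ∈ ℝⁿ : vᵢ = 0 whenever xᵢ ≠ 0} (with vᵢ ∈ ℝ arbitrary when xᵢ = 0). Moreover, for each (x,y) ∈ gph ∂g and each v = (v₁,…,vₙ) ∈ ℝⁿ, the second-order subdifferential is ∂²g(x,y)(v) = {w ∈ ℝⁿ : (wᵢ, −vᵢ) ∈ F(xᵢ, yᵢ) for i = 1,…,n}, where F : ℝ² ⇒ ℝ² is given by F(t,p) = {0} × ℝ if t ≠ 0 and p = 0; F(t,p) = ({0} × ℝ) ∪ (ℝ × {0}) if t = 0 and p = 0; F(t,p) = ℝ × {0} if t = 0 and p ≠ 0; and F(t,p) = ∅ otherwise. -/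
open Filter Topology

noncomputable section

open Paper

/-- The mapping `F : ℝ² ⇒ ℝ²` appearing in the second-order subdifferential of the
ℓ₀-norm. -/
def Fmap (t p : ℝ) : Set (ℝ × ℝ) :=
  if t ≠ 0 ∧ p = 0 then {q : ℝ × ℝ | q.1 = 0}
  else if t = 0 ∧ p = 0 then {q : ℝ × ℝ | q.1 = 0} ∪ {q : ℝ × ℝ | q.2 = 0}
  else if t = 0 ∧ p ≠ 0 then {q : ℝ × ℝ | q.2 = 0}
  else ∅

section Aux

variable {n : ℕ}

private lemma inner_eq_sum (a b : En n) : ⟪a, b⟫ = ∑ i, a i * b i := by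
  simp [PiLp.inner_apply, RCLike.inner_apply]
  exact Finset.sum_congr rfl fun _ _ => mul_comm _ _

private lemma abs_coord_le (u : En n) (i : Fin n) : |u i| ≤ ‖u‖ := by
  have h1 : ⟪u, EuclideanSpace.single i (1:ℝ)⟫ = u i := by
    rw [EuclideanSpace.inner_single_right]; simp
  calc |u i| = |⟪u, EuclideanSpace.single i (1:ℝ)⟫| := by rw [h1]
    _ ≤ ‖u‖ * ‖EuclideanSpace.single i (1:ℝ)‖ := abs_real_inner_le_norm _ _
    _ = ‖u‖ := by simp [EuclideanSpace.norm_single]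

private lemma eq_zero_of_forall {a : ℝ} (h : ∀ ε : ℝ, 0 < ε → a ≤ ε ∧ -a ≤ ε) : a = 0 := by
  by_contra hc
  have hp : 0 < |a| := abs_pos.2 hc
  have h1 := h (|a|/2) (by positivity)
  rcases le_or_gt 0 a with ha | ha
  · rw [abs_of_nonneg ha] at hp h1; linarith [h1.1]
  · rw [abs_of_neg ha] at hp h1; linarith [h1.2]

private lemma ell0_le {x y : En n} (h : ∀ i, x i ≠ 0 → y i ≠ 0) : ell0 x ≤ ell0 y := by
  apply Finset.card_le_card
  intro i hi
  simp only [Finset.mem_filter, Finset.mem_univ, true_and] at *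
  exact h i hi

private lemma ell0_lt {x y : En n} (h : ∀ i, x i ≠ 0 → y i ≠ 0) (j : Fin n)
    (hj : x j = 0) (hj2 : y j ≠ 0) : ell0 x + 1 ≤ ell0 y := by
  apply Finset.card_lt_card
  constructor
  · intro i hi
    simp only [Finset.mem_filter, Finset.mem_univ, true_and] at *
    exact h i hi
  · intro hsub
    have := hsub (Finset.mem_filter.2 ⟨Finset.mem_univ j, hj2⟩)
    simp only [Finset.mem_filter, Finset.mem_univ, true_and] at this
    exact this hj

private lemma ell0_congr {x y : En n} (h : ∀ i, x i ≠ 0 ↔ y i ≠ 0) : ell0 x = ell0 y := by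
  unfold ell0
  congr 1
  apply Finset.filter_congr
  intro i _
  exact h i

private lemma reg_coord {μ₀ : ℝ} {z w : En n}
    (hw : w ∈ RegSubdiff (fun y' : En n => ((μ₀ * ell0 y' : ℝ) : EReal)) z)
    {i : Fin n} (hzi : z i ≠ 0) : w i = 0 := by
  obtain ⟨-, h⟩ := hw
  apply eq_zero_of_forall
  intro ε hε
  obtain ⟨δ, hδ, h⟩ := h ε hε
  set t : ℝ := min (δ/2) (|z i|/2) with ht_def
  have hzpos : 0 < |z i| := abs_pos.2 hzi
  have ht : 0 < t := lt_min (by linarith) (by linarith)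
  have htδ : t < δ := lt_of_le_of_lt (min_le_left _ _) (by linarith)
  have ht2 : t ≤ |z i|/2 := min_le_right _ _
  have key : ∀ s : ℝ, |s| = t → s * w i ≤ ε * t := by
    intro s hs
    set u : En n := EuclideanSpace.single i (1:ℝ) with hu_def
    have hnorm : ‖(z + s • u) - z‖ = t := by
      rw [add_sub_cancel_left, norm_smul]
      simp [hu_def, hs]
    have hiff : ∀ j, (z + s • u) j ≠ 0 ↔ z j ≠ 0 := by
      intro j
      by_cases hji : j = i
      · subst hji
        have happ : (z + s • u) j = z j + s := by
          simp [hu_def, EuclideanSpace.single_apply]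
        rw [happ]
        constructor
        · intro _; exact hzi
        · intro _ hc
          have hs' : |s| = |z j| := by
            rw [show s = -(z j) by linarith, abs_neg]
          rw [hs] at hs'
          linarith
      · have happ : (z + s • u) j = z j := by
          simp [hu_def, EuclideanSpace.single_apply, hji]
        rw [happ]
    have hell : ell0 (z + s • u) = ell0 z := ell0_congr hiff
    have hkey := h (z + s • u) (by rw [hnorm]; exact htδ)
    rw [hnorm] at hkey
    have hinner : ⟪w, (z + s • u) - z⟫ = s * w i := by
      rw [add_sub_cancel_left, real_inner_smul_right, hu_def,
        EuclideanSpace.inner_single_right]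
      simp [mul_comm]
    rw [hinner] at hkey
    simp only [hell, ← EReal.coe_add, EReal.coe_le_coe_iff] at hkey
    linarith
  have h1 := key t (abs_of_pos ht)
  have h2 := key (-t) (by rw [abs_neg]; exact abs_of_pos ht)
  exact ⟨by nlinarith, by nlinarith⟩

private lemma reg_mem {μ₀ : ℝ} (hμ₀ : 0 < μ₀) {z v : En n}
    (hv : ∀ i, z i ≠ 0 → v i = 0) :
    v ∈ RegSubdiff (fun y' : En n => ((μ₀ * ell0 y' : ℝ) : EReal)) z := by
  refine ⟨EReal.coe_ne_top _, ?_⟩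
  intro ε hε
  classical
  set S : Finset ℝ :=
    insert (μ₀ / (‖v‖ + 1)) (Finset.univ.image fun i : Fin n => if z i = 0 then 1 else |z i|)
    with hS_def
  have hSne : S.Nonempty := ⟨_, Finset.mem_insert_self _ _⟩
  set δ : ℝ := S.min' hSne with hδ_def
  have hvpos : (0:ℝ) < ‖v‖ + 1 := by positivity
  have hδpos : 0 < δ := by
    have hmem := S.min'_mem hSne
    rw [← hδ_def] at hmem
    rcases Finset.mem_insert.1 hmem with h0 | h0
    · rw [h0]; positivity
    · obtain ⟨i, -, hi⟩ := Finset.mem_image.1 h0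
      rw [← hi]
      by_cases hzi : z i = 0
      · simp [hzi]
      · simp [hzi, abs_pos.2 hzi]
  have hδ1 : δ ≤ μ₀ / (‖v‖ + 1) := Finset.min'_le _ _ (Finset.mem_insert_self _ _)
  have hδ2 : ∀ i, z i ≠ 0 → δ ≤ |z i| := by
    intro i hi
    have h' := Finset.min'_le S _
      (Finset.mem_insert_of_mem (Finset.mem_image_of_mem _ (Finset.mem_univ i)))
    calc δ ≤ _ := h'
      _ = |z i| := if_neg hi
  refine ⟨δ, hδpos, ?_⟩
  intro y hy
  have hkeep : ∀ i, z i ≠ 0 → y i ≠ 0 := by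
    intro i hi hc
    have h1 : |y i - z i| ≤ ‖y - z‖ := abs_coord_le (y - z) i
    rw [hc, zero_sub, abs_neg] at h1
    have := hδ2 i hi
    linarith
  have hmono : ell0 z ≤ ell0 y := ell0_le hkeep
  simp only [← EReal.coe_add, EReal.coe_le_coe_iff]
  have hnn : 0 ≤ ε * ‖y - z‖ := mul_nonneg hε.le (norm_nonneg _)
  by_cases hb : ∃ j, z j = 0 ∧ y j ≠ 0
  · obtain ⟨j, hj1, hj2⟩ := hb
    have hlt : ell0 z + 1 ≤ ell0 y := ell0_lt hkeep j hj1 hj2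
    have hip : ⟪v, y - z⟫ ≤ μ₀ := by
      have h1 : ⟪v, y - z⟫ ≤ ‖v‖ * ‖y - z‖ := real_inner_le_norm _ _
      have h2 : ‖v‖ * ‖y - z‖ ≤ ‖v‖ * δ :=
        mul_le_mul_of_nonneg_left hy.le (norm_nonneg _)
      have h3 : ‖v‖ * δ ≤ ‖v‖ * (μ₀ / (‖v‖ + 1)) :=
        mul_le_mul_of_nonneg_left hδ1 (norm_nonneg _)
      have h4 : ‖v‖ * (μ₀ / (‖v‖ + 1)) ≤ μ₀ := by
        rw [mul_div_assoc', div_le_iff₀ hvpos]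
        nlinarith [norm_nonneg v]
      linarith
    have hcast : (ell0 z : ℝ) + 1 ≤ (ell0 y : ℝ) := by exact_mod_cast hlt
    nlinarith
  · push_neg at hb
    have hip : ⟪v, y - z⟫ = 0 := by
      rw [inner_eq_sum]
      apply Finset.sum_eq_zero
      intro i _
      by_cases hzi : z i = 0
      · have : y i = 0 := hb i hzi
        simp [this, hzi]
      · simp [hv i hzi]
    have hcast : (ell0 z : ℝ) ≤ (ell0 y : ℝ) := by exact_mod_cast hmono
    rw [hip]
    nlinarith

private lemma part1 {μ₀ : ℝ} (hμ₀ : 0 < μ₀) (x : En n) :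
    LimSubdiff (fun y : En n => ((μ₀ * ell0 y : ℝ) : EReal)) x =
      {v : En n | ∀ i : Fin n, x i ≠ 0 → v i = 0} := by
  ext v
  constructor
  · rintro ⟨xs, vs, hx, -, hv, hreg⟩ i hxi
    have hxs : Tendsto (fun k => xs k i) atTop (𝓝 (x i)) :=
      ((EuclideanSpace.proj i).continuous.tendsto x).comp hx
    have hvs : Tendsto (fun k => vs k i) atTop (𝓝 (v i)) :=
      ((EuclideanSpace.proj i).continuous.tendsto v).comp hv
    have hev : ∀ᶠ k in atTop, xs k i ≠ 0 := hxs.eventually_ne hxi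
    have hz : ∀ᶠ k in atTop, vs k i = 0 := hev.mono fun k hk => reg_coord (hreg k) hk
    exact tendsto_nhds_unique hvs (tendsto_const_nhds.congr' (hz.mono fun k hk => hk.symm))
  · intro hv
    exact ⟨fun _ => x, fun _ => v, tendsto_const_nhds, tendsto_const_nhds,
      tendsto_const_nhds, fun _ => reg_mem hμ₀ hv⟩

/-- The graph of the subdifferential, coordinatewise. -/
private def Omega0 (n : ℕ) : Set (En n × En n) :=
  {p | ∀ i : Fin n, p.1 i ≠ 0 → p.2 i = 0}

private lemma fmap_mem_iff (t p : ℝ) (htp : t ≠ 0 → p = 0) (q : ℝ × ℝ) :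
    q ∈ Fmap t p ↔
      ((t ≠ 0 → q.1 = 0) ∧ (p ≠ 0 → q.2 = 0) ∧ (t = 0 → p = 0 → q.1 = 0 ∨ q.2 = 0)) := by
  by_cases ht : t = 0
  · by_cases hp : p = 0
    · subst ht; subst hp
      have he : Fmap 0 0 = {q : ℝ × ℝ | q.1 = 0} ∪ {q : ℝ × ℝ | q.2 = 0} := by
        unfold Fmap
        rw [if_neg (by simp), if_pos ⟨rfl, rfl⟩]
      rw [he]
      simp only [Set.mem_union, Set.mem_setOf_eq]
      tauto
    · subst ht
      have he : Fmap 0 p = {q : ℝ × ℝ | q.2 = 0} := by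
        unfold Fmap
        rw [if_neg (by tauto), if_neg (by tauto), if_pos ⟨rfl, hp⟩]
      rw [he]
      simp only [Set.mem_setOf_eq]
      tauto
  · have hp : p = 0 := htp ht
    subst hp
    have he : Fmap t 0 = {q : ℝ × ℝ | q.1 = 0} := by
      unfold Fmap
      rw [if_pos ⟨ht, rfl⟩]
    rw [he]
    simp only [Set.mem_setOf_eq]
    tauto

private lemma nec_lemma {z q : En n × En n} (hz : z ∈ Omega0 n)
    (hq : q ∈ RegNormalConeP (Omega0 n) z) (i : Fin n) :
    (z.2 i = 0 → q.1 i = 0) ∧ (z.1 i = 0 → q.2 i = 0) := by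
  constructor
  · intro h2
    apply eq_zero_of_forall
    intro ε hε
    obtain ⟨δ, hδ, h⟩ := hq ε hε
    have key : ∀ s : ℝ, |s| = δ/2 → s * q.1 i ≤ ε * (δ/2) := by
      intro s hs
      set u : En n := EuclideanSpace.single i (1:ℝ) with hu_def
      set w : En n × En n := (z.1 + s • u, z.2) with hw_def
      have hwmem : w ∈ Omega0 n := by
        intro j hj
        by_cases hji : j = i
        · subst hji; exact h2
        · apply hz j
          have : w.1 j = z.1 j := by
            simp [hw_def, hu_def, EuclideanSpace.single_apply, hji]
          rwa [this] at hj
      have hsub : w - z = (s • u, 0) := by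
        simp [hw_def, Prod.ext_iff]
      have hnorm : ‖w - z‖ = δ/2 := by
        rw [hsub, Prod.norm_def]
        simp [norm_smul, hu_def, EuclideanSpace.norm_single, hs]
        linarith
      have := h w hwmem (by rw [hnorm]; linarith)
      rw [hnorm] at this
      have e1 : w.1 - z.1 = s • u := by simp [hw_def]
      have e2 : w.2 - z.2 = 0 := by simp [hw_def]
      rw [e1, e2, real_inner_smul_right, inner_zero_right, hu_def,
        EuclideanSpace.inner_single_right] at this
      simpa [mul_comm] using this
    have h1 := key (δ/2) (abs_of_pos (by linarith))
    have h2' := key (-(δ/2)) (by rw [abs_neg]; exact abs_of_pos (by linarith))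
    exact ⟨by nlinarith, by nlinarith⟩
  · intro h1
    apply eq_zero_of_forall
    intro ε hε
    obtain ⟨δ, hδ, h⟩ := hq ε hε
    have key : ∀ s : ℝ, |s| = δ/2 → s * q.2 i ≤ ε * (δ/2) := by
      intro s hs
      set u : En n := EuclideanSpace.single i (1:ℝ) with hu_def
      set w : En n × En n := (z.1, z.2 + s • u) with hw_def
      have hwmem : w ∈ Omega0 n := by
        intro j hj
        by_cases hji : j = i
        · subst hji
          exact absurd h1 (by simpa [hw_def] using hj)
        · have : w.2 j = z.2 j := by
            simp [hw_def, hu_def, EuclideanSpace.single_apply, hji]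
          rw [this]
          exact hz j (by simpa [hw_def] using hj)
      have hsub : w - z = (0, s • u) := by
        simp [hw_def, Prod.ext_iff]
      have hnorm : ‖w - z‖ = δ/2 := by
        rw [hsub, Prod.norm_def]
        simp [norm_smul, hu_def, EuclideanSpace.norm_single, hs]
        linarith
      have := h w hwmem (by rw [hnorm]; linarith)
      rw [hnorm] at this
      have e1 : w.1 - z.1 = 0 := by simp [hw_def]
      have e2 : w.2 - z.2 = s • u := by simp [hw_def]
      rw [e1, e2, real_inner_smul_right, inner_zero_right, hu_def,
        EuclideanSpace.inner_single_right] at this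
      simpa [mul_comm] using this
    have h1' := key (δ/2) (abs_of_pos (by linarith))
    have h2' := key (-(δ/2)) (by rw [abs_neg]; exact abs_of_pos (by linarith))
    exact ⟨by nlinarith, by nlinarith⟩

private lemma suf_lemma {z q : En n × En n}
    (hc : ∀ i : Fin n, (z.1 i ≠ 0 → z.2 i = 0) ∧ (z.2 i = 0 → q.1 i = 0) ∧
      (z.1 i = 0 → q.2 i = 0)) :
    q ∈ RegNormalConeP (Omega0 n) z := by
  classical
  intro ε hε
  set S : Finset ℝ :=
    insert 1 (Finset.univ.image fun i : Fin n =>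
      min (if z.1 i = 0 then 1 else |z.1 i|) (if z.2 i = 0 then 1 else |z.2 i|))
    with hS_def
  have hSne : S.Nonempty := ⟨_, Finset.mem_insert_self _ _⟩
  set δ : ℝ := S.min' hSne with hδ_def
  have hδpos : 0 < δ := by
    have hmem := S.min'_mem hSne
    rw [← hδ_def] at hmem
    rcases Finset.mem_insert.1 hmem with h0 | h0
    · rw [h0]; norm_num
    · obtain ⟨i, -, hi⟩ := Finset.mem_image.1 h0
      rw [← hi]
      apply lt_min
      · by_cases h : z.1 i = 0 <;> simp [h, abs_pos.2]
      · by_cases h : z.2 i = 0 <;> simp [h, abs_pos.2]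
  have hδ1 : ∀ i, z.1 i ≠ 0 → δ ≤ |z.1 i| := by
    intro i hi
    have := Finset.min'_le S _
      (Finset.mem_insert_of_mem (Finset.mem_image_of_mem _ (Finset.mem_univ i)))
    rw [← hδ_def] at this
    calc δ ≤ _ := this
      _ ≤ _ := min_le_left _ _
      _ = |z.1 i| := if_neg hi
  have hδ2 : ∀ i, z.2 i ≠ 0 → δ ≤ |z.2 i| := by
    intro i hi
    have := Finset.min'_le S _
      (Finset.mem_insert_of_mem (Finset.mem_image_of_mem _ (Finset.mem_univ i)))
    rw [← hδ_def] at this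
    calc δ ≤ _ := this
      _ ≤ _ := min_le_right _ _
      _ = |z.2 i| := if_neg hi
  refine ⟨δ, hδpos, ?_⟩
  intro w hw hwz
  have hb1 : ∀ i, |w.1 i - z.1 i| < δ := by
    intro i
    calc |w.1 i - z.1 i| ≤ ‖w.1 - z.1‖ := abs_coord_le (w.1 - z.1) i
      _ ≤ ‖w - z‖ := norm_fst_le (w - z)
      _ < δ := hwz
  have hb2 : ∀ i, |w.2 i - z.2 i| < δ := by
    intro i
    calc |w.2 i - z.2 i| ≤ ‖w.2 - z.2‖ := abs_coord_le (w.2 - z.2) i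
      _ ≤ ‖w - z‖ := norm_snd_le (w - z)
      _ < δ := hwz
  have hzero : ⟪q.1, w.1 - z.1⟫ + ⟪q.2, w.2 - z.2⟫ = 0 := by
    rw [inner_eq_sum, inner_eq_sum, ← Finset.sum_add_distrib]
    apply Finset.sum_eq_zero
    intro i _
    by_cases h1 : z.1 i = 0
    · by_cases h2 : z.2 i = 0
      · simp [(hc i).2.1 h2, (hc i).2.2 h1]
      · -- z.1 i = 0, z.2 i ≠ 0 : q.2 i = 0, w.1 i = 0
        have hq2 : q.2 i = 0 := (hc i).2.2 h1
        have hw2 : w.2 i ≠ 0 := by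
          intro hcon
          have := hb2 i
          rw [hcon, zero_sub, abs_neg] at this
          exact absurd this (not_lt.2 (hδ2 i h2))
        have hw1 : w.1 i = 0 := by
          by_contra hcon
          exact hw2 (hw i hcon)
        simp [hq2, hw1, h1]
    · -- z.1 i ≠ 0 : z.2 i = 0, q.1 i = 0, w.2 i = 0
      have hz2 : z.2 i = 0 := (hc i).1 h1
      have hq1 : q.1 i = 0 := (hc i).2.1 hz2
      have hw1 : w.1 i ≠ 0 := by
        intro hcon
        have := hb1 i
        rw [hcon, zero_sub, abs_neg] at this
        exact absurd this (not_lt.2 (hδ1 i h1))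
      have hw2 : w.2 i = 0 := hw i hw1
      simp [hq1, hw2, hz2]
  rw [hzero]
  positivity

private lemma limcone {x y : En n} (hxy : ∀ i, x i ≠ 0 → y i = 0) :
    LimNormalConeP (Omega0 n) (x, y) =
      {q : En n × En n | ∀ i : Fin n, ((q.1 i, q.2 i) : ℝ × ℝ) ∈ Fmap (x i) (y i)} := by
  ext q
  constructor
  · rintro ⟨zs, vs, hmem, hz, hv, hreg⟩ i
    rw [fmap_mem_iff _ _ (hxy i)]
    have hz1 : Tendsto (fun k => (zs k).1 i) atTop (𝓝 (x i)) :=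
      ((EuclideanSpace.proj i).continuous.tendsto x).comp
        ((continuous_fst.tendsto _).comp hz)
    have hz2 : Tendsto (fun k => (zs k).2 i) atTop (𝓝 (y i)) :=
      ((EuclideanSpace.proj i).continuous.tendsto y).comp
        ((continuous_snd.tendsto _).comp hz)
    have hv1 : Tendsto (fun k => (vs k).1 i) atTop (𝓝 (q.1 i)) :=
      ((EuclideanSpace.proj i).continuous.tendsto (q.1)).comp
        ((continuous_fst.tendsto _).comp hv)
    have hv2 : Tendsto (fun k => (vs k).2 i) atTop (𝓝 (q.2 i)) :=
      ((EuclideanSpace.proj i).continuous.tendsto (q.2)).comp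
        ((continuous_snd.tendsto _).comp hv)
    refine ⟨?_, ?_, ?_⟩
    · intro hxi
      have hev : ∀ᶠ k in atTop, (zs k).1 i ≠ 0 := hz1.eventually_ne hxi
      have h0 : ∀ᶠ k in atTop, (vs k).1 i = 0 := hev.mono fun k hk =>
        (nec_lemma (hmem k) (hreg k) i).1 (hmem k i hk)
      exact tendsto_nhds_unique hv1 (tendsto_const_nhds.congr' (h0.mono fun k hk => hk.symm))
    · intro hyi
      have hev : ∀ᶠ k in atTop, (zs k).2 i ≠ 0 := hz2.eventually_ne hyi
      have h0 : ∀ᶠ k in atTop, (vs k).2 i = 0 := hev.mono fun k hk =>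
        (nec_lemma (hmem k) (hreg k) i).2 (by
          by_contra hcon
          exact hk (hmem k i hcon))
      exact tendsto_nhds_unique hv2 (tendsto_const_nhds.congr' (h0.mono fun k hk => hk.symm))
    · intro _ _
      by_contra hcon
      push_neg at hcon
      obtain ⟨hq1, hq2⟩ := hcon
      have hev1 : ∀ᶠ k in atTop, (vs k).1 i ≠ 0 := hv1.eventually_ne hq1
      have hev2 : ∀ᶠ k in atTop, (vs k).2 i ≠ 0 := hv2.eventually_ne hq2
      obtain ⟨k, hk1, hk2⟩ := (hev1.and hev2).exists
      have hnec := nec_lemma (hmem k) (hreg k) i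
      have hz2k : (zs k).2 i ≠ 0 := by
        intro hcon2
        exact hk1 (hnec.1 hcon2)
      have hz1k : (zs k).1 i = 0 := by
        by_contra hcon2
        exact hz2k (hmem k i hcon2)
      exact hk2 (hnec.2 hz1k)
  · intro hq
    classical
    set d1 : En n := WithLp.toLp 2 (fun i => if x i = 0 ∧ y i = 0 ∧ q.1 i = 0 then (1:ℝ) else 0) with hd1
    set d2 : En n := WithLp.toLp 2 (fun i => if x i = 0 ∧ y i = 0 ∧ q.1 i ≠ 0 then (1:ℝ) else 0) with hd2
    have hq' : ∀ i, (x i ≠ 0 → q.1 i = 0) ∧ (y i ≠ 0 → q.2 i = 0) ∧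
        (x i = 0 → y i = 0 → q.1 i = 0 ∨ q.2 i = 0) := fun i =>
      (fmap_mem_iff _ _ (hxy i) _).1 (hq i)
    have htpos : ∀ k : ℕ, (0:ℝ) < 1 / (k + 1) := fun k => by positivity
    refine ⟨fun k => (x + (1/(k+1:ℝ)) • d1, y + (1/(k+1:ℝ)) • d2), fun _ => q,
      ?_, ?_, tendsto_const_nhds, ?_⟩
    · -- membership in Omega0
      intro k i hi
      show y i + (1/(k+1:ℝ)) * d2 i = 0
      have hi' : x i + (1/(k+1:ℝ)) * d1 i ≠ 0 := hi
      by_cases h1 : x i = 0 ∧ y i = 0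
      · have hd1i : d1 i ≠ 0 := by
          intro hcon
          apply hi'
          rw [h1.1, hcon, mul_zero, add_zero]
        have hq1 : q.1 i = 0 := by
          by_contra hcon
          exact hd1i (by simp [hd1, h1.1, h1.2, hcon])
        have hd2i : d2 i = 0 := by simp [hd2, hq1]
        rw [h1.2, hd2i, mul_zero, add_zero]
      · have hd1i : d1 i = 0 := by
          simp only [hd1]
          rw [if_neg]
          intro hcon
          exact h1 ⟨hcon.1, hcon.2.1⟩
        have hxi : x i ≠ 0 := by
          intro hcon
          apply hi'
          rw [hcon, hd1i, mul_zero, add_zero]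
        have hd2i : d2 i = 0 := by
          simp only [hd2]
          rw [if_neg]
          intro hcon
          exact hxi hcon.1
        rw [hxy i hxi, hd2i, mul_zero, add_zero]
    · -- convergence
      have ht0 : Tendsto (fun k : ℕ => (1/(k+1) : ℝ)) atTop (𝓝 0) :=
        tendsto_one_div_add_atTop_nhds_zero_nat
      have l1 : Tendsto (fun k : ℕ => x + (1/(k+1:ℝ)) • d1) atTop (𝓝 x) := by
        simpa using (ht0.smul_const d1).const_add x
      have l2 : Tendsto (fun k : ℕ => y + (1/(k+1:ℝ)) • d2) atTop (𝓝 y) := by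
        simpa using (ht0.smul_const d2).const_add y
      exact l1.prodMk_nhds l2
    · -- regular normal cone membership
      intro k
      apply suf_lemma
      intro i
      have hqi := hq' i
      have ht : (0:ℝ) < 1/(k+1:ℝ) := htpos k
      show ((x i + (1/(k+1:ℝ)) * d1 i ≠ 0 → y i + (1/(k+1:ℝ)) * d2 i = 0) ∧
        (y i + (1/(k+1:ℝ)) * d2 i = 0 → q.1 i = 0) ∧
        (x i + (1/(k+1:ℝ)) * d1 i = 0 → q.2 i = 0))
      by_cases hx : x i = 0
      · by_cases hy : y i = 0
        · by_cases hq1 : q.1 i = 0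
          · have hd1i : d1 i = 1 := by simp [hd1, hx, hy, hq1]
            have hd2i : d2 i = 0 := by simp [hd2, hq1]
            simp only [hx, hy, hd1i, hd2i, mul_one, mul_zero, add_zero, zero_add]
            exact ⟨fun _ => by trivial, fun _ => hq1, fun hcon => absurd hcon (ne_of_gt ht)⟩
          · have hq2 : q.2 i = 0 := (hqi.2.2 hx hy).resolve_left hq1
            have hd1i : d1 i = 0 := by simp [hd1, hq1]
            have hd2i : d2 i = 1 := by simp [hd2, hx, hy, hq1]
            simp only [hx, hy, hd1i, hd2i, mul_one, mul_zero, add_zero, zero_add]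
            exact ⟨fun hcon => absurd rfl hcon, fun hcon => absurd hcon (ne_of_gt ht),
              fun _ => hq2⟩
        · have hq2 : q.2 i = 0 := hqi.2.1 hy
          have hd1i : d1 i = 0 := by simp [hd1, hy]
          have hd2i : d2 i = 0 := by simp [hd2, hy]
          simp only [hx, hd1i, hd2i, mul_zero, mul_zero, add_zero, zero_add]
          exact ⟨fun hcon => absurd rfl hcon, fun hcon => absurd hcon hy, fun _ => hq2⟩
      · have hy : y i = 0 := hxy i hx
        have hq1 : q.1 i = 0 := hqi.1 hx
        have hd1i : d1 i = 0 := by simp [hd1, hx]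
        have hd2i : d2 i = 0 := by simp [hd2, hx]
        simp only [hy, hd1i, hd2i, mul_zero, mul_zero, add_zero, zero_add]
        exact ⟨fun _ => by trivial, fun _ => hq1, fun hcon => absurd hcon hx⟩

end Aux

/-- first- and second-order subdifferentials of `x ↦ μ₀‖x‖₀`. -/
theorem statement18 {n : ℕ} (μ₀ : ℝ) (hμ₀ : 0 < μ₀) :
    (∀ x : En n,
      LimSubdiff (fun y : En n => ((μ₀ * ell0 y : ℝ) : EReal)) x =
        {v : En n | ∀ i : Fin n, x i ≠ 0 → v i = 0}) ∧
    (∀ x y : En n,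
      y ∈ LimSubdiff (fun y' : En n => ((μ₀ * ell0 y' : ℝ) : EReal)) x →
      ∀ v : En n,
        SecondSubdiff (fun y' : En n => ((μ₀ * ell0 y' : ℝ) : EReal)) x y v =
          {w : En n | ∀ i : Fin n, ((w i, -(v i)) : ℝ × ℝ) ∈ Fmap (x i) (y i)}) := by
  constructor
  · exact fun x => part1 hμ₀ x
  · intro x y hy v
    have hxy : ∀ i, x i ≠ 0 → y i = 0 := by
      rw [part1 hμ₀ x] at hy
      exact hy
    have hgph : gphSubdiff (fun y' : En n => ((μ₀ * ell0 y' : ℝ) : EReal)) = Omega0 n := by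
      ext p
      simp only [gphSubdiff, Omega0, Set.mem_setOf_eq, part1 hμ₀]
    ext w
    show (w, -v) ∈ LimNormalConeP _ (x, y) ↔ _
    rw [hgph, limcone hxy]
    rfl
end
end
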